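/- arXiv:2306.05408 — 3 statements merged into one kernel-verified Lean document; each statement's English description precedes it below -/
import Mathlib

section
/- Let 1 ≤ p, q < ∞ and let g be holomorphic on 𝔻. The multiplication operator M_g f = g·f is bounded on RM(p,q), i.e., there exists C > 0 such that ρ_{p,q}(g·f) ≤ C ρ_{p,q}(f) for all f ∈ RM(p,q), if and only if g ∈ H^∞. -/
open MeasureTheory Complex Set
open scoped Real ENNReal

noncomputable section

/-- The open unit disc in `ℂ`. -/
def unitDisc : Set ℂ := Metric.ball 0 1

/-- The normalized area Lebesgue measure on `ℂ`. -/
def mA : Measure ℂ := (ENNReal.ofReal Real.pi)⁻¹ • (volume : Measure ℂ)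

/-- The cone-like region `Γ_β(ξ) = {|z| < β} ∪ ⋃_{|z|<β} [z, ξ)`. -/
def coneRegion (β : ℝ) (ξ : ℂ) : Set ℂ :=
  {z : ℂ | ‖z‖ < β} ∪
    ⋃ z ∈ {w : ℂ | ‖w‖ < β},
      {w : ℂ | ∃ t : ℝ, 0 ≤ t ∧ t < 1 ∧ w = (1 - t) * z + t * ξ}

/-- The pseudohyperbolic disc `Δ(α,η)`. -/
def pDisc (α : ℂ) (η : ℝ) : Set ℂ :=
  {z ∈ unitDisc | ‖(α - z) / (1 - (starRingEnd ℂ) α * z)‖ < η}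

/-- The Euclidean disc `Δ_η(α) = {z : |z - α| < η(1-|α|)}`. -/
def eDisc (η : ℝ) (α : ℂ) : Set ℂ :=
  {z : ℂ | ‖z - α‖ < η * (1 - ‖α‖)}

/-- The tent-space expression of `f` with aperture `β`, restricted to a set `G`:
`(∫_𝕋 (∫_{Γ_β(ξ) ∩ G} |f(z)|^p dm(z)/(1-|z|))^{q/p} |dξ|)^{1/q}`. -/
def tentNormOn (p q β : ℝ) (G : Set ℂ) (f : ℂ → ℂ) : ℝ≥0∞ :=
  (∫⁻ θ in Set.Ioo 0 (2 * Real.pi),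
      (∫⁻ z in coneRegion β (Complex.exp (θ * Complex.I)) ∩ G,
          ENNReal.ofReal (‖f z‖ ^ p / (1 - ‖z‖)) ∂mA) ^ (q / p))
    ^ (1 / q)

/-- The tent space (quasi-)norm `‖f‖_{T_p^q}` (aperture `1/2`). -/
def tentNorm (p q : ℝ) (f : ℂ → ℂ) : ℝ≥0∞ := tentNormOn p q (1/2) Set.univ f

/-- `ρ_{p,q}(f) = ((1/2π)∫_0^{2π} (∫_0^1 |f(re^{iθ})|^p dr)^{q/p} dθ)^{1/q}`. -/
def rho (p q : ℝ) (f : ℂ → ℂ) : ℝ≥0∞ :=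
  ((ENNReal.ofReal (2 * Real.pi))⁻¹ *
      ∫⁻ θ in Set.Ioo 0 (2 * Real.pi),
        (∫⁻ r in Set.Ioo (0:ℝ) 1,
            ENNReal.ofReal (‖f ((r : ℂ) * Complex.exp (θ * Complex.I))‖ ^ p))
          ^ (q / p)) ^ (1 / q)

/-- Membership in `RM(p,q)`. -/
def memRM (p q : ℝ) (f : ℂ → ℂ) : Prop :=
  DifferentiableOn ℂ f unitDisc ∧ rho p q f < ⊤

/-- The Pommerenke integration operator `T_g f(z) = ∫_0^z f(ζ) g'(ζ) dζ`. -/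
def Tg (g f : ℂ → ℂ) (z : ℂ) : ℂ :=
  z * ∫ t in Set.Ioo (0:ℝ) 1, f ((t : ℂ) * z) * deriv g ((t : ℂ) * z)

/-- The companion operator `S_g f(z) = ∫_0^z f'(ζ) g(ζ) dζ`. -/
def Sg (g f : ℂ → ℂ) (z : ℂ) : ℂ :=
  z * ∫ t in Set.Ioo (0:ℝ) 1, deriv f ((t : ℂ) * z) * g ((t : ℂ) * z)

/-- Membership in the Bloch space `𝓑`. -/
def memBloch (g : ℂ → ℂ) : Prop :=
  DifferentiableOn ℂ g unitDisc ∧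
    ∃ M : ℝ, ∀ z ∈ unitDisc, ‖deriv g z‖ * (1 - ‖z‖ ^ 2) ≤ M

/-- Membership in `H^∞`. -/
def memHinf (g : ℂ → ℂ) : Prop :=
  DifferentiableOn ℂ g unitDisc ∧ ∃ M : ℝ, ∀ z ∈ unitDisc, ‖g z‖ ≤ M

/-- The set `E_λ(α) = {z ∈ Δ_η(α) : |f(z)|^p ≥ λ |f(α)|^p}`. -/
def Eset (p η : ℝ) (f : ℂ → ℂ) (lam : ℝ) (α : ℂ) : Set ℂ :=
  {z ∈ eDisc η α | lam * ‖f α‖ ^ p ≤ ‖f z‖ ^ p}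

/-- The average `B_λ f(α) = (1/m(E_λ(α))) ∫_{E_λ(α)} |f(z)|^p dm(z)` (in `ℝ≥0∞`). -/
def Bavg (p η : ℝ) (f : ℂ → ℂ) (lam : ℝ) (α : ℂ) : ℝ≥0∞ :=
  (∫⁻ z in Eset p η f lam α, ENNReal.ofReal (‖f z‖ ^ p) ∂mA) /
    mA (Eset p η f lam α)

/-- The derivative variant `E_λ(α) = {z ∈ Δ_η(α) : (1-|z|)^p |f'(z)|^p ≥ λ (1-|α|)^p |f'(α)|^p}`. -/
def EsetD (p η : ℝ) (f : ℂ → ℂ) (lam : ℝ) (α : ℂ) : Set ℂ :=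
  {z ∈ eDisc η α |
    lam * ((1 - ‖α‖) ^ p * ‖deriv f α‖ ^ p) ≤
      (1 - ‖z‖) ^ p * ‖deriv f z‖ ^ p}

/-- The derivative variant of `B_λ f(α)` (in `ℝ≥0∞`). -/
def BavgD (p η : ℝ) (f : ℂ → ℂ) (lam : ℝ) (α : ℂ) : ℝ≥0∞ :=
  (∫⁻ z in EsetD p η f lam α,
      ENNReal.ofReal (‖deriv f z‖ ^ p * (1 - ‖z‖) ^ p) ∂mA) /
    mA (EsetD p η f lam α)

/-- The test functions `f_α(z) = (1-|α|²)^{γ-1/p-1/q} / (1-ᾱz)^γ`. -/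
def testFun (p q γ : ℝ) (α z : ℂ) : ℂ :=
  (((1 - ‖α‖ ^ 2) ^ (γ - 1/p - 1/q) : ℝ) : ℂ) /
    (1 - (starRingEnd ℂ) α * z) ^ (γ : ℂ)

-- Auxiliary definitions and lemmas for the proof ----------------------------

/-- The inner radial integral of `rho`. -/
def II (p : ℝ) (f : ℂ → ℂ) (θ : ℝ) : ℝ≥0∞ :=
  ∫⁻ r in Set.Ioo (0:ℝ) 1,
    ENNReal.ofReal (‖f ((r : ℂ) * Complex.exp (θ * Complex.I))‖ ^ p)

lemma self_le_one_add_rpow {a p : ℝ} (ha : 0 ≤ a) (hp : 1 ≤ p) : a ≤ 1 + a ^ p := by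
  rcases le_total a 1 with h | h
  · linarith [Real.rpow_nonneg ha p]
  · calc a = a ^ (1:ℝ) := (Real.rpow_one a).symm
    _ ≤ a ^ p := Real.rpow_le_rpow_of_exponent_le h hp
    _ ≤ 1 + a ^ p := by linarith

lemma abs_mul_exp (r t : ℝ) : ‖(r:ℂ) * Complex.exp (t * Complex.I)‖ = |r| := by
  simp [Complex.norm_exp]

lemma le_of_pow_le_mul_pow {x A B : ℝ} (hB : 0 < B) (hx : 0 ≤ x)
    (h : ∀ n : ℕ, x ^ n ≤ A * B ^ n) : x ≤ B := by
  by_contra hlt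
  push_neg at hlt
  have hr : 1 < x / B := (one_lt_div hB).2 hlt
  obtain ⟨n, hn⟩ := pow_unbounded_of_one_lt A hr
  have h2 : (x / B) ^ n ≤ A := by
    rw [div_pow, div_le_iff₀ (by positivity)]
    exact h n
  exact absurd h2 (not_le.2 hn)

lemma rho_smul_le (p q M : ℝ) (hp : 1 ≤ p) (hq : 1 ≤ q) (hM : 0 ≤ M)
    {f h : ℂ → ℂ} (hfh : ∀ z ∈ unitDisc, ‖h z‖ ≤ M * ‖f z‖) :
    rho p q h ≤ ENNReal.ofReal M * rho p q f := by
  have hp0 : (0:ℝ) < p := lt_of_lt_of_le one_pos hp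
  have hq0 : (0:ℝ) < q := lt_of_lt_of_le one_pos hq
  set c : ℝ≥0∞ := ENNReal.ofReal (M ^ p) with hc
  have hcM : c = ENNReal.ofReal M ^ p := (ENNReal.ofReal_rpow_of_nonneg hM hp0.le).symm
  have key : ∀ w ∈ unitDisc,
      ENNReal.ofReal (‖h w‖ ^ p) ≤ c * ENNReal.ofReal (‖f w‖ ^ p) := by
    intro w hw
    rw [hc, ← ENNReal.ofReal_mul (by positivity)]
    apply ENNReal.ofReal_le_ofReal
    rw [← Real.mul_rpow hM (norm_nonneg _)]
    exact Real.rpow_le_rpow (norm_nonneg _) (hfh w hw) hp0.le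
  have inner : ∀ θ : ℝ,
      (∫⁻ r in Set.Ioo (0:ℝ) 1,
          ENNReal.ofReal (‖h ((r : ℂ) * Complex.exp (θ * Complex.I))‖ ^ p))
        ≤ c * ∫⁻ r in Set.Ioo (0:ℝ) 1,
          ENNReal.ofReal (‖f ((r : ℂ) * Complex.exp (θ * Complex.I))‖ ^ p) := by
    intro θ
    rw [← lintegral_const_mul' c _ ENNReal.ofReal_ne_top]
    apply setLIntegral_mono' measurableSet_Ioo
    intro r hr
    apply key
    simp only [unitDisc, Metric.mem_ball, dist_zero_right]
    rw [abs_mul_exp, abs_of_pos hr.1]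
    exact hr.2
  set X := ∫⁻ θ in Set.Ioo 0 (2 * Real.pi),
        (∫⁻ r in Set.Ioo (0:ℝ) 1,
            ENNReal.ofReal (‖f ((r : ℂ) * Complex.exp (θ * Complex.I))‖ ^ p))
          ^ (q / p) with hX
  set Y := ∫⁻ θ in Set.Ioo 0 (2 * Real.pi),
        (∫⁻ r in Set.Ioo (0:ℝ) 1,
            ENNReal.ofReal (‖h ((r : ℂ) * Complex.exp (θ * Complex.I))‖ ^ p))
          ^ (q / p) with hY
  have hqp : (0:ℝ) ≤ q / p := by positivity
  have houter : Y ≤ c ^ (q/p) * X := by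
    rw [hY, hX, ← lintegral_const_mul' _ _ (ENNReal.rpow_ne_top_of_nonneg hqp ENNReal.ofReal_ne_top)]
    apply lintegral_mono
    intro θ
    dsimp only
    rw [← ENNReal.mul_rpow_of_nonneg _ _ hqp]
    exact ENNReal.rpow_le_rpow (inner θ) hqp
  show ((ENNReal.ofReal (2 * Real.pi))⁻¹ * Y) ^ (1/q)
      ≤ ENNReal.ofReal M * ((ENNReal.ofReal (2 * Real.pi))⁻¹ * X) ^ (1/q)
  have step : (ENNReal.ofReal (2 * Real.pi))⁻¹ * Y
      ≤ c ^ (q/p) * ((ENNReal.ofReal (2 * Real.pi))⁻¹ * X) := by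
    calc (ENNReal.ofReal (2 * Real.pi))⁻¹ * Y
        ≤ (ENNReal.ofReal (2 * Real.pi))⁻¹ * (c ^ (q/p) * X) := mul_le_mul_right houter _
      _ = c ^ (q/p) * ((ENNReal.ofReal (2 * Real.pi))⁻¹ * X) := by ring
  calc ((ENNReal.ofReal (2 * Real.pi))⁻¹ * Y) ^ (1/q)
      ≤ (c ^ (q/p) * ((ENNReal.ofReal (2 * Real.pi))⁻¹ * X)) ^ (1/q) :=
        ENNReal.rpow_le_rpow step (by positivity)
    _ = (c ^ (q/p)) ^ (1/q) * ((ENNReal.ofReal (2 * Real.pi))⁻¹ * X) ^ (1/q) :=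
        ENNReal.mul_rpow_of_nonneg _ _ (by positivity)
    _ = ENNReal.ofReal M * ((ENNReal.ofReal (2 * Real.pi))⁻¹ * X) ^ (1/q) := by
        congr 1
        rw [hcM, ← ENNReal.rpow_mul, ← ENNReal.rpow_mul,
          show p * (q/p * (1/q)) = 1 by field_simp, ENNReal.rpow_one]
  done

lemma rho_one (p q : ℝ) : rho p q (fun _ => 1) = 1 := by
  unfold rho
  simp only [map_one, norm_one, Real.one_rpow, ENNReal.ofReal_one, setLIntegral_const, one_mul,
    Real.volume_Ioo, sub_zero, ENNReal.one_rpow]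
  rw [ENNReal.inv_mul_cancel (by positivity) ENNReal.ofReal_ne_top, ENNReal.one_rpow]

lemma mem_unitDisc (r t : ℝ) (h0 : 0 < r) (h1 : r < 1) :
    (r:ℂ) * Complex.exp (t * Complex.I) ∈ unitDisc := by
  simp only [unitDisc, Metric.mem_ball, dist_zero_right]
  simp [Complex.norm_exp, abs_of_pos h0, h1]

lemma cauchy_circle {f : ℂ → ℂ} (hf : DifferentiableOn ℂ f unitDisc) {z : ℂ}
    (hz : z ∈ unitDisc) {r : ℝ} (hr : r ∈ Set.Ioo ((1 + ‖z‖)/2) 1) :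
    2 * π * ((1 - ‖z‖)/2) * ‖f z‖
      ≤ ∫ t in (0:ℝ)..(2*π), ‖f ((r:ℂ) * Complex.exp (t * Complex.I))‖ := by
  set a := ‖z‖ with ha
  have ha0 : 0 ≤ a := norm_nonneg z
  have ha1 : a < 1 := by simpa [unitDisc] using hz
  set δ : ℝ := (1 - a)/2 with hδdef
  have hδ : 0 < δ := by simp only [hδdef]; linarith
  obtain ⟨hrl, hr1⟩ := hr
  have hr0 : 0 < r := lt_of_lt_of_le (by linarith) hrl.le
  have hsub : Metric.closedBall (0:ℂ) r ⊆ unitDisc := Metric.closedBall_subset_ball hr1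
  have hdc : DiffContOnCl ℂ f (Metric.ball 0 r) := by
    apply DifferentiableOn.diffContOnCl
    rw [closure_ball (0:ℂ) hr0.ne']
    exact hf.mono hsub
  have hzr : z ∈ Metric.ball (0:ℂ) r := by
    simp only [Metric.mem_ball, dist_zero_right, ← ha]
    linarith
  have key := hdc.circleIntegral_sub_inv_smul hzr
  have hnorm : ‖(2 * ↑π * Complex.I) • f z‖ = 2 * π * ‖f z‖ := by
    rw [norm_smul]
    simp only [norm_mul, Complex.norm_two, Complex.norm_real, Real.norm_eq_abs, Complex.norm_I,
      mul_one, _root_.abs_of_nonneg Real.pi_pos.le]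
  -- continuity of integrands
  have hfc : Continuous fun t : ℝ => f (circleMap 0 r t) := by
    apply hf.continuousOn.comp_continuous (continuous_circleMap 0 r)
    intro t
    exact hsub (circleMap_mem_closedBall 0 hr0.le t)
  have habs : Continuous fun t : ℝ => ‖f (circleMap 0 r t)‖ :=
    continuous_norm.comp hfc
  have hden : ∀ t : ℝ, δ ≤ ‖circleMap 0 r t - z‖ := by
    intro t
    have h1 : ‖circleMap 0 r t‖ - a ≤ ‖circleMap 0 r t - z‖ := by
      simpa [ha] using norm_sub_norm_le (circleMap 0 r t) z
    rw [norm_circleMap_zero, abs_of_pos hr0] at h1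
    linarith
  have hint1 : Continuous fun t : ℝ =>
      deriv (circleMap 0 r) t • ((circleMap 0 r t - z)⁻¹ • f (circleMap 0 r t)) := by
    simp only [deriv_circleMap]
    apply Continuous.smul ((continuous_circleMap 0 r).mul continuous_const)
    apply Continuous.smul (f := fun t => (circleMap 0 r t - z)⁻¹) _ hfc
    apply Continuous.inv₀ ((continuous_circleMap 0 r).sub continuous_const)
    intro t
    intro (h : circleMap 0 r t - z = 0)
    have := hden t
    rw [h] at this
    simp at this
    linarith
  have hb1 : ‖∮ w in C(0, r), (w - z)⁻¹ • f w‖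
      ≤ ∫ t in (0:ℝ)..(2*π), ‖deriv (circleMap 0 r) t • ((circleMap 0 r t - z)⁻¹ • f (circleMap 0 r t))‖ := by
    rw [circleIntegral]
    exact intervalIntegral.norm_integral_le_integral_norm (by positivity)
  have hb2 : ∫ t in (0:ℝ)..(2*π), ‖deriv (circleMap 0 r) t • ((circleMap 0 r t - z)⁻¹ • f (circleMap 0 r t))‖
      ≤ ∫ t in (0:ℝ)..(2*π), δ⁻¹ * ‖f (circleMap 0 r t)‖ := by
    apply intervalIntegral.integral_mono_on (by positivity)
    · exact (hint1.norm).intervalIntegrable _ _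
    · exact ((continuous_const.mul habs)).intervalIntegrable _ _
    intro t _
    rw [norm_smul, norm_smul, deriv_circleMap]
    simp only [norm_mul, Complex.norm_I, mul_one, norm_inv,
      norm_circleMap_zero, abs_of_pos hr0]
    have h1 : (‖circleMap 0 r t - z‖)⁻¹ ≤ δ⁻¹ :=
      inv_anti₀ hδ (hden t)
    calc r * ((‖circleMap 0 r t - z‖)⁻¹ * ‖f (circleMap 0 r t)‖)
        ≤ 1 * (δ⁻¹ * ‖f (circleMap 0 r t)‖) := by
          apply mul_le_mul hr1.le (by
            apply mul_le_mul_of_nonneg_right h1 (norm_nonneg _)) (by positivity) zero_le_one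
      _ = δ⁻¹ * ‖f (circleMap 0 r t)‖ := one_mul _
  have hb3 : ∫ t in (0:ℝ)..(2*π), δ⁻¹ * ‖f (circleMap 0 r t)‖
      = δ⁻¹ * ∫ t in (0:ℝ)..(2*π), ‖f (circleMap 0 r t)‖ :=
    intervalIntegral.integral_const_mul _ _
  have hmain : 2 * π * ‖f z‖
      ≤ δ⁻¹ * ∫ t in (0:ℝ)..(2*π), ‖f (circleMap 0 r t)‖ := by
    rw [← hb3]
    calc 2 * π * ‖f z‖ = ‖(2 * ↑π * Complex.I) • f z‖ := hnorm.symm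
      _ = ‖∮ w in C(0, r), (w - z)⁻¹ • f w‖ := by rw [key]
      _ ≤ _ := le_trans hb1 hb2
  have hfin : 2 * π * δ * ‖f z‖
      ≤ ∫ t in (0:ℝ)..(2*π), ‖f (circleMap 0 r t)‖ := by
    have := mul_le_mul_of_nonneg_left hmain hδ.le
    rw [mul_inv_cancel_left₀ hδ.ne'] at this
    calc 2 * π * δ * ‖f z‖ = δ * (2 * π * ‖f z‖) := by ring
      _ ≤ _ := this
  have hcm : ∀ t : ℝ, circleMap 0 r t = (r:ℂ) * Complex.exp (t * Complex.I) := by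
    intro t; simp [circleMap]
  calc 2 * π * ((1-a)/2) * ‖f z‖ = 2 * π * δ * ‖f z‖ := rfl
    _ ≤ ∫ t in (0:ℝ)..(2*π), ‖f (circleMap 0 r t)‖ := hfin
    _ = _ := by simp_rw [hcm]

lemma stepAB {f : ℂ → ℂ} (hf : DifferentiableOn ℂ f unitDisc) {z : ℂ}
    (hz : z ∈ unitDisc) {r : ℝ} (hr : r ∈ Set.Ioo ((1 + ‖z‖)/2) 1) :
    ENNReal.ofReal (2 * π * ((1 - ‖z‖)/2) * ‖f z‖)
      ≤ ∫⁻ t in Set.Ioo (0:ℝ) (2*π),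
          ENNReal.ofReal (‖f ((r:ℂ) * Complex.exp (t * Complex.I))‖) := by
  have ha1 : ‖z‖ < 1 := by simpa [unitDisc] using hz
  have hr0 : (0:ℝ) < r := lt_of_le_of_lt (by positivity) hr.1
  have hfc : Continuous fun t : ℝ => ‖f ((r:ℂ) * Complex.exp (t * Complex.I))‖ := by
    apply continuous_norm.comp
    apply hf.continuousOn.comp_continuous
    · exact (Complex.continuous_ofReal.comp continuous_const).mul
        (Complex.continuous_exp.comp ((Complex.continuous_ofReal).mul continuous_const))
    · intro t
      simp only [unitDisc, Metric.mem_ball, dist_zero_right, Function.comp]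
      simp [Complex.norm_exp, abs_of_pos hr0, hr.2]
  have h1 := cauchy_circle hf hz hr
  have h2 : (∫ t in (0:ℝ)..(2*π), ‖f ((r:ℂ) * Complex.exp (t * Complex.I))‖)
      = ∫ t in Set.Ioc (0:ℝ) (2*π), ‖f ((r:ℂ) * Complex.exp (t * Complex.I))‖ :=
    intervalIntegral.integral_of_le (by positivity)
  calc ENNReal.ofReal (2 * π * ((1 - ‖z‖)/2) * ‖f z‖)
      ≤ ENNReal.ofReal (∫ t in Set.Ioc (0:ℝ) (2*π),
          ‖f ((r:ℂ) * Complex.exp (t * Complex.I))‖) := by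
        apply ENNReal.ofReal_le_ofReal; rw [← h2]; exact h1
    _ = ∫⁻ t in Set.Ioc (0:ℝ) (2*π),
          ENNReal.ofReal (‖f ((r:ℂ) * Complex.exp (t * Complex.I))‖) := by
        apply ofReal_integral_eq_lintegral_ofReal
        · exact (hfc.integrableOn_Ioc)
        · exact Filter.Eventually.of_forall fun t => norm_nonneg _
    _ = ∫⁻ t in Set.Ioo (0:ℝ) (2*π),
          ENNReal.ofReal (‖f ((r:ℂ) * Complex.exp (t * Complex.I))‖) := by
        exact (setLIntegral_congr Ioo_ae_eq_Ioc).symm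

lemma master {p : ℝ} (hp : 1 ≤ p) {f : ℂ → ℂ} (hf : DifferentiableOn ℂ f unitDisc) {z : ℂ}
    (hz : z ∈ unitDisc) :
    ENNReal.ofReal (2 * π * ((1 - ‖z‖)/2) * ‖f z‖)
        * ENNReal.ofReal ((1 - ‖z‖)/2)
      ≤ ENNReal.ofReal (2*π) + ∫⁻ t in Set.Ioo (0:ℝ) (2*π), II p f t := by
  set a := ‖z‖ with ha
  have ha0 : 0 ≤ a := norm_nonneg z
  have ha1 : a < 1 := by simpa [unitDisc] using hz
  set s : ℝ := (1 + a)/2 with hs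
  set δ : ℝ := (1 - a)/2 with hδ
  have hδ0 : 0 < δ := by simp only [hδ]; linarith
  have hs0 : (0:ℝ) < s := by simp only [hs]; linarith
  have hs1 : s < 1 := by simp only [hs]; linarith
  have hvol : volume (Set.Ioo s 1) = ENNReal.ofReal δ := by
    rw [Real.volume_Ioo]; congr 1; simp only [hδ, hs]; ring
  -- joint measurability
  have hjoint : AEMeasurable (fun rt : ℝ × ℝ =>
      ENNReal.ofReal (‖f ((rt.1 : ℂ) * Complex.exp (rt.2 * Complex.I))‖))
      ((volume.restrict (Set.Ioo s 1)).prod (volume.restrict (Set.Ioo (0:ℝ) (2*π)))) := by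
    rw [Measure.prod_restrict]
    apply ContinuousOn.aemeasurable _ (measurableSet_Ioo.prod measurableSet_Ioo)
    apply ENNReal.continuous_ofReal.comp_continuousOn
    apply continuous_norm.comp_continuousOn
    apply hf.continuousOn.comp
    · apply Continuous.continuousOn
      exact (Complex.continuous_ofReal.comp continuous_fst).mul
        (Complex.continuous_exp.comp ((Complex.continuous_ofReal.comp continuous_snd).mul
          continuous_const))
    · intro x hx
      simp only [unitDisc, Metric.mem_ball, dist_zero_right]
      have hx1 : 0 < x.1 := lt_trans hs0 hx.1.1
      simp [Complex.norm_exp, abs_of_pos hx1, hx.1.2]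
  calc ENNReal.ofReal (2 * π * δ * ‖f z‖) * ENNReal.ofReal δ
      = ∫⁻ _ in Set.Ioo s 1, ENNReal.ofReal (2 * π * δ * ‖f z‖) := by
        rw [setLIntegral_const, hvol]
    _ ≤ ∫⁻ r in Set.Ioo s 1, ∫⁻ t in Set.Ioo (0:ℝ) (2*π),
          ENNReal.ofReal (‖f ((r:ℂ) * Complex.exp (t * Complex.I))‖) := by
        apply setLIntegral_mono' measurableSet_Ioo
        intro r hr
        exact stepAB hf hz hr
    _ = ∫⁻ t in Set.Ioo (0:ℝ) (2*π), ∫⁻ r in Set.Ioo s 1,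
          ENNReal.ofReal (‖f ((r:ℂ) * Complex.exp (t * Complex.I))‖) :=
        lintegral_lintegral_swap hjoint
    _ ≤ ∫⁻ t in Set.Ioo (0:ℝ) (2*π), (1 + II p f t) := by
        apply lintegral_mono
        intro t
        calc (∫⁻ r in Set.Ioo s 1,
              ENNReal.ofReal (‖f ((r:ℂ) * Complex.exp (t * Complex.I))‖))
            ≤ ∫⁻ r in Set.Ioo (0:ℝ) 1,
              ENNReal.ofReal (‖f ((r:ℂ) * Complex.exp (t * Complex.I))‖) :=
              lintegral_mono_set (Set.Ioo_subset_Ioo hs0.le le_rfl)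
          _ ≤ ∫⁻ r in Set.Ioo (0:ℝ) 1,
              (1 + ENNReal.ofReal (‖f ((r:ℂ) * Complex.exp (t * Complex.I))‖ ^ p)) := by
              apply lintegral_mono
              intro r
              dsimp only
              rw [← ENNReal.ofReal_one, ← ENNReal.ofReal_add zero_le_one (by positivity)]
              exact ENNReal.ofReal_le_ofReal (self_le_one_add_rpow (norm_nonneg _) hp)
          _ = 1 + II p f t := by
              rw [lintegral_add_left measurable_const, setLIntegral_const, Real.volume_Ioo]
              simp [II]
    _ = ENNReal.ofReal (2*π) + ∫⁻ t in Set.Ioo (0:ℝ) (2*π), II p f t := by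
        rw [lintegral_add_left measurable_const, setLIntegral_const, Real.volume_Ioo]
        simp

lemma rpow_le_one_add_rpow {a e1 e2 : ℝ} (ha : 0 ≤ a) (he1 : 0 ≤ e1) (he : e1 ≤ e2) :
    a ^ e1 ≤ 1 + a ^ e2 := by
  rcases le_total a 1 with h | h
  · have := Real.rpow_le_one ha h he1
    linarith [Real.rpow_nonneg ha e2]
  · have := Real.rpow_le_rpow_of_exponent_le h he
    linarith

-- ENNReal: X ≤ 1 + X^s for 1 ≤ s

lemma ennreal_le_one_add_rpow {X : ℝ≥0∞} {s : ℝ} (hs : 1 ≤ s) : X ≤ 1 + X ^ s := by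
  rcases le_total X 1 with h | h
  · exact le_trans h le_self_add
  · calc X = X ^ (1:ℝ) := (ENNReal.rpow_one X).symm
      _ ≤ X ^ s := ENNReal.rpow_le_rpow_of_exponent_le h hs
      _ ≤ 1 + X ^ s := le_add_self

-- ENNReal: (1+X)^s ≤ 2 + 2 X^s for 0 ≤ s ≤ 1

lemma ennreal_one_add_rpow_le {X : ℝ≥0∞} {s : ℝ} (hs0 : 0 ≤ s) (hs1 : s ≤ 1) :
    (1 + X) ^ s ≤ 2 + 2 * X ^ s := by
  rcases le_total X 1 with h | h
  · calc (1 + X) ^ s ≤ (2:ℝ≥0∞) ^ s := ENNReal.rpow_le_rpow (by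
        calc (1:ℝ≥0∞) + X ≤ 1 + 1 := add_le_add_right h 1
          _ = 2 := one_add_one_eq_two) hs0
      _ ≤ (2:ℝ≥0∞) ^ (1:ℝ) := ENNReal.rpow_le_rpow_of_exponent_le one_le_two hs1
      _ = 2 := ENNReal.rpow_one 2
      _ ≤ 2 + 2 * X ^ s := le_self_add
  · calc (1 + X) ^ s ≤ (2 * X) ^ s := ENNReal.rpow_le_rpow (by
        calc (1:ℝ≥0∞) + X ≤ X + X := add_le_add_left h X
          _ = 2 * X := (two_mul X).symm) hs0
      _ = 2 ^ s * X ^ s := ENNReal.mul_rpow_of_nonneg 2 _ hs0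
      _ ≤ 2 * X ^ s := by
          apply mul_le_mul_left
          calc (2:ℝ≥0∞) ^ s ≤ (2:ℝ≥0∞) ^ (1:ℝ) := ENNReal.rpow_le_rpow_of_exponent_le one_le_two hs1
            _ = 2 := ENNReal.rpow_one 2
      _ ≤ 2 + 2 * X ^ s := le_add_self

lemma II_pow_eq (p : ℝ) (g : ℂ → ℂ) (n : ℕ) (t : ℝ) (hp : 0 ≤ p) :
    II p (fun z => g z ^ n) t
      = ∫⁻ r in Set.Ioo (0:ℝ) 1,
          ENNReal.ofReal (‖g ((r : ℂ) * Complex.exp (t * Complex.I))‖ ^ ((n:ℝ) * p)) := by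
  unfold II
  congr 1
  funext r
  congr 1
  rw [norm_pow, ← Real.rpow_natCast (‖_‖) n, ← Real.rpow_mul (norm_nonneg _)]

lemma stepF {p q : ℝ} (hp : 1 ≤ p) (hq : 1 ≤ q) {g : ℂ → ℂ} (hg : DifferentiableOn ℂ g unitDisc)
    (n N : ℕ) (hN : (n:ℝ) * max 1 (p/q) ≤ N) (t : ℝ) :
    II p (fun z => g z ^ n) t ≤ 2 + 2 * (II p (fun z => g z ^ N) t) ^ (q/p) := by
  have hp0 : (0:ℝ) < p := lt_of_lt_of_le one_pos hp
  have hq0 : (0:ℝ) < q := lt_of_lt_of_le one_pos hq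
  set a : ℝ → ℝ := fun r => ‖g ((r : ℂ) * Complex.exp (t * Complex.I))‖ with haf
  have ha0 : ∀ r, 0 ≤ a r := fun r => norm_nonneg _
  rw [II_pow_eq p g n t hp0.le, II_pow_eq p g N t hp0.le]
  set Y := ∫⁻ r in Set.Ioo (0:ℝ) 1, ENNReal.ofReal (a r ^ ((N:ℝ) * p)) with hY
  have hvol : (volume.restrict (Set.Ioo (0:ℝ) 1)) Set.univ = 1 := by
    simp [Real.volume_Ioo]
  rcases le_or_gt p q with hpq | hpq
  · -- easy case : q/p ≥ 1
    have hmax : max 1 (p/q) = 1 := max_eq_left (by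
      rw [div_le_one hq0]; exact hpq)
    rw [hmax, mul_one] at hN
    have step1 : (∫⁻ r in Set.Ioo (0:ℝ) 1, ENNReal.ofReal (a r ^ ((n:ℝ) * p))) ≤ 1 + Y := by
      calc (∫⁻ r in Set.Ioo (0:ℝ) 1, ENNReal.ofReal (a r ^ ((n:ℝ) * p)))
          ≤ ∫⁻ r in Set.Ioo (0:ℝ) 1, (1 + ENNReal.ofReal (a r ^ ((N:ℝ) * p))) := by
            apply lintegral_mono; intro r; dsimp only
            rw [← ENNReal.ofReal_one, ← ENNReal.ofReal_add zero_le_one (by positivity)]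
            apply ENNReal.ofReal_le_ofReal
            exact rpow_le_one_add_rpow (ha0 r) (by positivity)
              (by apply mul_le_mul_of_nonneg_right hN hp0.le)
        _ = 1 + Y := by
            rw [lintegral_add_left measurable_const, setLIntegral_const, Real.volume_Ioo]
            simp [hY]
    calc (∫⁻ r in Set.Ioo (0:ℝ) 1, ENNReal.ofReal (a r ^ ((n:ℝ) * p))) ≤ 1 + Y := step1
      _ ≤ 1 + (1 + Y ^ (q/p)) := add_le_add_right (ennreal_le_one_add_rpow (by
            rw [le_div_iff₀ hp0, one_mul]; exact hpq)) 1
      _ = 2 + Y ^ (q/p) := by ring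
      _ ≤ 2 + 2 * Y ^ (q/p) := add_le_add_right (le_mul_of_one_le_left zero_le one_le_two) 2
  · -- hard case : k = p/q > 1
    set k : ℝ := p / q with hk
    have hk1 : 1 < k := by rw [hk, lt_div_iff₀ hq0, one_mul]; exact hpq
    have hmax : max 1 (p/q) = k := max_eq_right hk1.le
    rw [hmax] at hN
    have hconj : k.HolderConjugate (Real.conjExponent k) := Real.HolderConjugate.conjExponent hk1
    -- measurability
    have hbase : AEMeasurable a (volume.restrict (Set.Ioo (0:ℝ) 1)) := by
      apply ContinuousOn.aemeasurable _ measurableSet_Ioo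
      apply continuous_norm.comp_continuousOn
      apply hg.continuousOn.comp
      · exact (Complex.continuous_ofReal.mul
          (Complex.continuous_exp.comp (continuous_const.mul continuous_const))).continuousOn
      · intro r hr
        simp only [unitDisc, Metric.mem_ball, dist_zero_right]
        simp [Complex.norm_exp, abs_of_pos hr.1, hr.2]
    have hmeas : AEMeasurable (fun r => ENNReal.ofReal (a r ^ ((n:ℝ) * p)))
        (volume.restrict (Set.Ioo (0:ℝ) 1)) :=
      (ENNReal.continuous_ofReal.comp (Real.continuous_rpow_const (by positivity))).measurable.comp_aemeasurable hbase
    have hold := ENNReal.lintegral_mul_le_Lp_mul_Lq (volume.restrict (Set.Ioo (0:ℝ) 1)) hconj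
      hmeas (aemeasurable_const : AEMeasurable (fun _ => (1:ℝ≥0∞)) _)
    simp only [Pi.mul_apply, mul_one, ENNReal.one_rpow, lintegral_const, hvol, one_mul,
      ENNReal.one_rpow] at hold
    have hpow : (∫⁻ r in Set.Ioo (0:ℝ) 1, ENNReal.ofReal (a r ^ ((n:ℝ) * p)) ^ k) ≤ 1 + Y := by
      calc (∫⁻ r in Set.Ioo (0:ℝ) 1, ENNReal.ofReal (a r ^ ((n:ℝ) * p)) ^ k)
          ≤ ∫⁻ r in Set.Ioo (0:ℝ) 1, (1 + ENNReal.ofReal (a r ^ ((N:ℝ) * p))) := by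
            apply lintegral_mono; intro r; dsimp only
            rw [ENNReal.ofReal_rpow_of_nonneg (by positivity) (by positivity),
              ← Real.rpow_mul (ha0 r)]
            rw [← ENNReal.ofReal_one, ← ENNReal.ofReal_add zero_le_one (by positivity)]
            apply ENNReal.ofReal_le_ofReal
            apply rpow_le_one_add_rpow (ha0 r) (by positivity)
            calc (n:ℝ) * p * k = (n:ℝ) * k * p := by ring
              _ ≤ (N:ℝ) * p := mul_le_mul_of_nonneg_right hN hp0.le
        _ = 1 + Y := by
            rw [lintegral_add_left measurable_const, setLIntegral_const, Real.volume_Ioo]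
            simp [hY]
    have hqp1 : (q:ℝ)/p ≤ 1 := by rw [div_le_one hp0]; exact hpq.le
    have hinvk : 1/k = q/p := by rw [hk]; field_simp
    calc (∫⁻ r in Set.Ioo (0:ℝ) 1, ENNReal.ofReal (a r ^ ((n:ℝ) * p)))
        ≤ (∫⁻ r in Set.Ioo (0:ℝ) 1, ENNReal.ofReal (a r ^ ((n:ℝ) * p)) ^ k) ^ (1/k) := hold
      _ ≤ (1 + Y) ^ (1/k) := ENNReal.rpow_le_rpow hpow (by positivity)
      _ = (1 + Y) ^ (q/p) := by rw [hinvk]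
      _ ≤ 2 + 2 * Y ^ (q/p) := ennreal_one_add_rpow_le (by positivity) hqp1

lemma S_bound {p q : ℝ} (hq0 : 0 < q) {f : ℂ → ℂ} {c : ℝ≥0∞} (h : rho p q f ≤ c) :
    (∫⁻ t in Set.Ioo (0:ℝ) (2*π), (II p f t) ^ (q/p)) ≤ ENNReal.ofReal (2*π) * c ^ q := by
  set S := ∫⁻ t in Set.Ioo (0:ℝ) (2*π), (II p f t) ^ (q/p) with hS
  have h2 : rho p q f = ((ENNReal.ofReal (2*π))⁻¹ * S) ^ (1/q) := rfl
  rw [h2] at h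
  have h3 := ENNReal.rpow_le_rpow h hq0.le
  rw [← ENNReal.rpow_mul, one_div, inv_mul_cancel₀ hq0.ne', ENNReal.rpow_one] at h3
  calc S = ENNReal.ofReal (2*π) * ((ENNReal.ofReal (2*π))⁻¹ * S) := by
        rw [← mul_assoc, ENNReal.mul_inv_cancel (by positivity) ENNReal.ofReal_ne_top, one_mul]
    _ ≤ ENNReal.ofReal (2*π) * c ^ q := mul_le_mul_right h3 _

lemma rho_pow_le {p q C : ℝ} {g : ℂ → ℂ} (hg : DifferentiableOn ℂ g unitDisc)
    (hb : ∀ f : ℂ → ℂ, memRM p q f →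
      rho p q (fun z => g z * f z) ≤ ENNReal.ofReal C * rho p q f) :
    ∀ n : ℕ, rho p q (fun z => g z ^ n) ≤ (ENNReal.ofReal C) ^ n := by
  intro n
  induction n with
  | zero =>
      have : (fun z : ℂ => g z ^ 0) = fun _ => (1:ℂ) := funext fun z => pow_zero _
      rw [this, rho_one, pow_zero]
  | succ n ih =>
      have hmem : memRM p q (fun z => g z ^ n) :=
        ⟨hg.pow n, lt_of_le_of_lt ih (ENNReal.pow_lt_top ENNReal.ofReal_lt_top)⟩
      have h1 := hb _ hmem
      have heq : (fun z => g z * g z ^ n) = (fun z : ℂ => g z ^ (n+1)) :=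
        funext fun z => by ring
      rw [heq] at h1
      calc rho p q (fun z => g z ^ (n+1)) ≤ ENNReal.ofReal C * (ENNReal.ofReal C) ^ n :=
            le_trans h1 (mul_le_mul_right ih _)
        _ = (ENNReal.ofReal C) ^ (n+1) := by ring

lemma forward_bound {p q : ℝ} (hp : 1 ≤ p) (hq : 1 ≤ q) {g : ℂ → ℂ}
    (hg : DifferentiableOn ℂ g unitDisc) {C : ℝ} (hC1 : 1 ≤ C)
    (hb : ∀ f : ℂ → ℂ, memRM p q f →
      rho p q (fun z => g z * f z) ≤ ENNReal.ofReal C * rho p q f)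
    {z : ℂ} (hz : z ∈ unitDisc) : ‖g z‖ ≤ C ^ (max 1 (p/q) * q) := by
  have hp0 : (0:ℝ) < p := lt_of_lt_of_le one_pos hp
  have hq0 : (0:ℝ) < q := lt_of_lt_of_le one_pos hq
  have hC0 : (0:ℝ) < C := lt_of_lt_of_le one_pos hC1
  set k : ℝ := max 1 (p/q) with hk
  have hk1 : (1:ℝ) ≤ k := le_max_left _ _
  have hk0 : (0:ℝ) < k := lt_of_lt_of_le one_pos hk1
  have ha1 : ‖z‖ < 1 := by simpa [unitDisc] using hz
  have ha0 : (0:ℝ) ≤ ‖z‖ := norm_nonneg z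
  set δ : ℝ := (1 - ‖z‖)/2 with hδ
  have hδ0 : 0 < δ := by simp only [hδ]; linarith
  set B : ℝ := C ^ (k * q) with hB
  have hB0 : 0 < B := Real.rpow_pos_of_pos hC0 _
  apply le_of_pow_le_mul_pow (A := 5 * δ⁻¹ * δ⁻¹ * C ^ q) hB0 (norm_nonneg _)
  intro n
  set N : ℕ := ⌈(n:ℝ) * k⌉₊ with hNdef
  have hNk : (n:ℝ) * k ≤ N := Nat.le_ceil _
  have hNk2 : (N:ℝ) ≤ (n:ℝ) * k + 1 := le_of_lt (Nat.ceil_lt_add_one (by positivity))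
  set E : ℝ := (C ^ N) ^ q with hE
  have hCN1 : (1:ℝ) ≤ C ^ N := one_le_pow₀ hC1
  have hE1 : (1:ℝ) ≤ E := by
    rw [hE]
    calc (1:ℝ) = 1 ^ q := (Real.one_rpow q).symm
      _ ≤ (C ^ N) ^ q := Real.rpow_le_rpow zero_le_one hCN1 hq0.le
  -- ENNReal chain
  have hrho := rho_pow_le hg hb N
  have hS := S_bound (p := p) hq0 hrho
  have hmaster := master hp (hg.pow n) hz
  have hstepF : (∫⁻ t in Set.Ioo (0:ℝ) (2*π), II p (fun z => g z ^ n) t)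
      ≤ ENNReal.ofReal (2*π) * 2 + 2 * ∫⁻ t in Set.Ioo (0:ℝ) (2*π),
          (II p (fun z => g z ^ N) t) ^ (q/p) := by
    calc (∫⁻ t in Set.Ioo (0:ℝ) (2*π), II p (fun z => g z ^ n) t)
        ≤ ∫⁻ t in Set.Ioo (0:ℝ) (2*π),
            (2 + 2 * (II p (fun z => g z ^ N) t) ^ (q/p)) :=
          lintegral_mono fun t => stepF hp hq hg n N hNk t
      _ = ENNReal.ofReal (2*π) * 2 + 2 * ∫⁻ t in Set.Ioo (0:ℝ) (2*π),
            (II p (fun z => g z ^ N) t) ^ (q/p) := by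
          rw [lintegral_add_left measurable_const, setLIntegral_const, Real.volume_Ioo,
            lintegral_const_mul' 2 _ (by norm_num), sub_zero, mul_comm]
  have hcq : ((ENNReal.ofReal C) ^ N) ^ q = ENNReal.ofReal E := by
    rw [← ENNReal.ofReal_pow hC0.le, ENNReal.ofReal_rpow_of_nonneg (by positivity) hq0.le, hE]
  have h2 : (2:ℝ≥0∞) = ENNReal.ofReal 2 := by norm_num
  have hchain : ENNReal.ofReal (2 * π * δ * ‖g z ^ n‖) * ENNReal.ofReal δ
      ≤ ENNReal.ofReal (10 * π * E) := by
    calc ENNReal.ofReal (2 * π * δ * ‖g z ^ n‖) * ENNReal.ofReal δ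
        ≤ ENNReal.ofReal (2*π) + ∫⁻ t in Set.Ioo (0:ℝ) (2*π), II p (fun z => g z ^ n) t :=
          hmaster
      _ ≤ ENNReal.ofReal (2*π) + (ENNReal.ofReal (2*π) * 2 + 2 *
            ∫⁻ t in Set.Ioo (0:ℝ) (2*π), (II p (fun z => g z ^ N) t) ^ (q/p)) :=
          add_le_add_right hstepF _
      _ ≤ ENNReal.ofReal (2*π) + (ENNReal.ofReal (2*π) * 2 +
            2 * (ENNReal.ofReal (2*π) * ((ENNReal.ofReal C) ^ N) ^ q)) := by
          apply add_le_add_right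
          apply add_le_add_right
          exact mul_le_mul_right hS _
      _ = ENNReal.ofReal (2*π + (2*π*2 + 2*(2*π*E))) := by
          rw [hcq, h2, ← ENNReal.ofReal_mul (by positivity), ← ENNReal.ofReal_mul (by positivity),
            ← ENNReal.ofReal_mul (by positivity), ← ENNReal.ofReal_add (by positivity) (by positivity),
            ← ENNReal.ofReal_add (by positivity) (by positivity)]
      _ ≤ ENNReal.ofReal (10 * π * E) := by
          apply ENNReal.ofReal_le_ofReal
          nlinarith [Real.pi_pos, hE1]
  -- to real
  have hreal : 2 * π * δ * ‖g z ^ n‖ * δ ≤ 10 * π * E := by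
    rw [← ENNReal.ofReal_mul (by positivity)] at hchain
    exact (ENNReal.ofReal_le_ofReal_iff (by positivity)).1 hchain
  rw [norm_pow] at hreal
  have hstep1 : ‖g z‖ ^ n ≤ 5 * δ⁻¹ * δ⁻¹ * E := by
    rw [← mul_le_mul_iff_right₀ (show (0:ℝ) < 2 * π * δ * δ by positivity)]
    calc 2 * π * δ * δ * (‖g z‖ ^ n)
        = 2 * π * δ * ‖g z‖ ^ n * δ := by ring
      _ ≤ 10 * π * E := hreal
      _ = 2 * π * δ * δ * (5 * δ⁻¹ * δ⁻¹ * E) := by field_simp; ring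
  -- bound E
  have hEbound : E ≤ C ^ q * B ^ n := by
    have e1 : E = C ^ ((N:ℝ) * q) := by
      rw [hE, ← Real.rpow_natCast C N, ← Real.rpow_mul hC0.le]
    have e2 : C ^ ((N:ℝ) * q) ≤ C ^ (((n:ℝ) * k + 1) * q) :=
      Real.rpow_le_rpow_of_exponent_le hC1
        (mul_le_mul_of_nonneg_right hNk2 hq0.le)
    have e3 : C ^ (((n:ℝ) * k + 1) * q) = (C ^ (k*q)) ^ (n:ℝ) * C ^ q := by
      rw [show ((n:ℝ) * k + 1) * q = (k*q) * (n:ℝ) + q by ring, Real.rpow_add hC0,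
        Real.rpow_mul hC0.le]
    rw [e1]
    calc C ^ ((N:ℝ) * q) ≤ (C ^ (k*q)) ^ (n:ℝ) * C ^ q := by rw [← e3]; exact e2
      _ = C ^ q * B ^ n := by
          rw [Real.rpow_natCast, hB]; ring
  calc ‖g z‖ ^ n ≤ 5 * δ⁻¹ * δ⁻¹ * E := hstep1
    _ ≤ 5 * δ⁻¹ * δ⁻¹ * (C ^ q * B ^ n) := by
        apply mul_le_mul_of_nonneg_left hEbound (by positivity)
    _ = 5 * δ⁻¹ * δ⁻¹ * C ^ q * B ^ n := by ring

/-- `M_g` is bounded on `RM(p,q)` iff `g ∈ H^∞`. -/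
theorem Mg_bounded_iff_Hinf (p q : ℝ) (hp : 1 ≤ p) (hq : 1 ≤ q)
    (g : ℂ → ℂ) (hg : DifferentiableOn ℂ g unitDisc) :
    (∃ C > (0:ℝ), ∀ f : ℂ → ℂ, memRM p q f →
        rho p q (fun z => g z * f z) ≤ ENNReal.ofReal C * rho p q f) ↔ memHinf g := by
  constructor
  · rintro ⟨C, hC0, hb⟩
    refine ⟨hg, (max C 1) ^ (max 1 (p/q) * q), fun z hz => ?_⟩
    refine forward_bound hp hq hg (le_max_right C 1) (fun f hf => ?_) hz
    exact le_trans (hb f hf)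
      (mul_le_mul_left (ENNReal.ofReal_le_ofReal (le_max_left C 1)) _)
  · rintro ⟨hgd, M, hM⟩
    refine ⟨max M 1, lt_of_lt_of_le one_pos (le_max_right M 1), fun f hf => ?_⟩
    apply rho_smul_le p q (max M 1) hp hq (le_trans zero_le_one (le_max_right M 1))
    intro z hz
    rw [norm_mul]
    exact mul_le_mul_of_nonneg_right (le_trans (hM z hz) (le_max_left M 1))
      (norm_nonneg _)
end
end

section
/- Let 1 ≤ p < ∞, η ∈ (0,1), ε > 0, let f be holomorphic on 𝔻, and set 𝒜 = {α ∈ 𝔻 : |f(α)|^p < (ε / m(Δ_η(α))) ∫_{Δ_η(α)} |f(z)|^p dm(z)}. Then there exist a constant C₁ = C₁(η) > 0 and β ∈ (1/2, 1), both depending only on η (and p), such that for every ξ ∈ 𝕋, ∫_{𝒜 ∩ Γ_{1/2}(ξ)} |f(z)|^p dm(z)/(1−|z|) ≤ ε C₁ ∫_{Γ_β(ξ)} |f(z)|^p dm(z)/(1−|z|). -/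
open MeasureTheory Complex Set
open scoped Real ENNReal

noncomputable section

section AuxLemmas

lemma abs_one_sub_cast {t : ℝ} (ht : t ≤ 1) : ‖1 - (t:ℂ)‖ = 1 - t := by
  rw [show (1 - (t:ℂ)) = ((1 - t : ℝ) : ℂ) by push_cast; ring, Complex.norm_real, Real.norm_eq_abs,
    _root_.abs_of_nonneg (by linarith : (0:ℝ) ≤ 1 - t)]

lemma mem_coneRegion_iff {β : ℝ} {ξ w : ℂ} :
    w ∈ coneRegion β ξ ↔ ∃ t : ℝ, 0 ≤ t ∧ t < 1 ∧ ‖w - (t:ℂ) * ξ‖ < (1 - t) * β := by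
  constructor
  · rintro (h | h)
    · exact ⟨0, le_refl _, by norm_num, by simpa using h⟩
    · simp only [mem_iUnion, mem_setOf_eq, exists_prop] at h
      obtain ⟨z, hz, t, ht0, ht1, rfl⟩ := h
      refine ⟨t, ht0, ht1, ?_⟩
      have h1 : (1 - (t:ℂ)) * z + (t:ℂ) * ξ - (t:ℂ) * ξ = (1 - (t:ℂ)) * z := by ring
      rw [h1, norm_mul, abs_one_sub_cast ht1.le]
      exact mul_lt_mul_of_pos_left hz (by linarith)
  · rintro ⟨t, ht0, ht1, hlt⟩
    right
    have hne : (1 - (t:ℂ)) ≠ 0 := by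
      rw [show (1 - (t:ℂ)) = ((1 - t : ℝ) : ℂ) by push_cast; ring]
      exact_mod_cast sub_ne_zero.2 (by intro h; rw [h] at ht1; exact lt_irrefl _ ht1)
    simp only [mem_iUnion, mem_setOf_eq, exists_prop]
    refine ⟨(w - (t:ℂ) * ξ) / (1 - (t:ℂ)), ?_, t, ht0, ht1, by field_simp; ring⟩
    rw [norm_div, abs_one_sub_cast ht1.le, div_lt_iff₀ (by linarith)]
    linarith [hlt]

lemma isOpen_coneRegion {β : ℝ} {ξ : ℂ} : IsOpen (coneRegion β ξ) := by
  have : coneRegion β ξ = ⋃ t ∈ Set.Ico (0:ℝ) 1, Metric.ball ((t:ℂ) * ξ) ((1 - t) * β) := by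
    ext w
    rw [mem_coneRegion_iff]
    simp [Metric.mem_ball, Complex.dist_eq, Set.mem_Ico, and_assoc]
  rw [this]
  exact isOpen_biUnion fun _ _ => Metric.isOpen_ball

lemma coneRegion_subset_unitDisc {β : ℝ} {ξ : ℂ} (hβ : β ≤ 1) (hξ : ‖ξ‖ = 1) :
    coneRegion β ξ ⊆ unitDisc := by
  intro w hw
  obtain ⟨t, ht0, ht1, hlt⟩ := mem_coneRegion_iff.1 hw
  have : ‖w‖ ≤ ‖w - (t:ℂ)*ξ‖ + ‖(t:ℂ)*ξ‖ := by
    simpa using norm_add_le (w - (t:ℂ)*ξ) ((t:ℂ)*ξ)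
  have h2 : ‖(t:ℂ)*ξ‖ = t := by
    rw [norm_mul, hξ, Complex.norm_real, Real.norm_eq_abs, _root_.abs_of_nonneg ht0, mul_one]
  have h3 : (1-t)*β ≤ 1 - t := by nlinarith
  simp only [unitDisc, Metric.mem_ball, Complex.dist_eq, sub_zero]
  linarith

/-- auxiliary constant -/
def Mconst (η : ℝ) : ℝ := (1 + η) / (1 - η)
/-- the aperture β -/
def betaConst (η : ℝ) : ℝ := 1 - (1 - η) / (4 * (1 + Mconst η ^ 2))

lemma Mconst_ge_one {η : ℝ} (hη : η ∈ Set.Ioo (0:ℝ) 1) : 1 ≤ Mconst η := by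
  obtain ⟨h0, h1⟩ := hη
  rw [Mconst, le_div_iff₀ (by linarith)]
  linarith

lemma betaConst_mem {η : ℝ} (hη : η ∈ Set.Ioo (0:ℝ) 1) :
    betaConst η ∈ Set.Ioo (1/2 : ℝ) 1 := by
  obtain ⟨h0, h1⟩ := hη
  have hM := Mconst_ge_one ⟨h0, h1⟩
  have hK : (2:ℝ) ≤ 1 + Mconst η ^ 2 := by nlinarith
  constructor
  · rw [betaConst]
    have : (1 - η) / (4 * (1 + Mconst η ^ 2)) ≤ 1/8 := by
      rw [div_le_iff₀ (by nlinarith)]; nlinarith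
    linarith
  · rw [betaConst]
    have : 0 < (1 - η) / (4 * (1 + Mconst η ^ 2)) := by
      apply div_pos (by linarith) (by nlinarith)
    linarith

lemma betaConst_key {η : ℝ} (hη : η ∈ Set.Ioo (0:ℝ) 1) :
    (1 + Mconst η ^ 2) * (1 - betaConst η ^ 2) ≤ 1 := by
  obtain ⟨h0, h1⟩ := hη
  have hM := Mconst_ge_one ⟨h0, h1⟩
  have hK : (2:ℝ) ≤ 1 + Mconst η ^ 2 := by nlinarith
  have hβ := betaConst_mem ⟨h0, h1⟩
  obtain ⟨hb1, hb2⟩ := hβ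
  set K := 1 + Mconst η ^ 2
  have hc : betaConst η = 1 - (1 - η) / (4 * K) := rfl
  set c := (1 - η) / (4 * K) with hcdef
  have hc0 : 0 < c := by
    rw [hcdef]; apply div_pos (by linarith) (by nlinarith)
  have hKc : K * c = (1 - η) / 4 := by
    rw [hcdef]; field_simp
  have h2 : 1 - betaConst η ^ 2 ≤ 2 * c := by rw [hc]; nlinarith
  calc K * (1 - betaConst η ^ 2) ≤ K * (2 * c) := by
        apply mul_le_mul_of_nonneg_left h2 (by nlinarith)
    _ = 2 * (K * c) := by ring
    _ = (1 - η) / 2 := by rw [hKc]; ring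
    _ ≤ 1 := by linarith

lemma abs_sub_real_sq (z : ℂ) (t : ℝ) :
    ‖z - (t:ℂ)‖ ^ 2 = (z.re - t) ^ 2 + z.im ^ 2 := by
  rw [Complex.sq_norm, Complex.normSq_apply]
  simp [Complex.sub_re, Complex.sub_im]; ring

lemma cone_facts {ξ α : ℂ} (hξ : ‖ξ‖ = 1) (hα : α ∈ coneRegion (1/2) ξ) :
    ‖α‖ < 1 ∧ |(α * (starRingEnd ℂ) ξ).im| ≤ 1 - (α * (starRingEnd ℂ) ξ).re ∧
      1 - (α * (starRingEnd ℂ) ξ).re ≤ 3 * (1 - ‖α‖) := by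
  obtain ⟨t, ht0, ht1, hlt⟩ := mem_coneRegion_iff.1 hα
  have hcc : ξ * (starRingEnd ℂ) ξ = 1 := by
    rw [Complex.mul_conj]
    rw [Complex.normSq_eq_norm_sq, hξ]; norm_num
  have hrep : α * (starRingEnd ℂ) ξ = (α - (t:ℂ)*ξ) * (starRingEnd ℂ) ξ + (t:ℂ) := by
    have : (α - (t:ℂ)*ξ) * (starRingEnd ℂ) ξ = α * (starRingEnd ℂ) ξ - (t:ℂ) * (ξ * (starRingEnd ℂ) ξ) := by ring
    rw [this, hcc]; ring
  set δ := (α - (t:ℂ)*ξ) * (starRingEnd ℂ) ξ with hδ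
  have habsδ : ‖δ‖ < (1 - t) * (1/2) := by
    rw [hδ, norm_mul, Complex.norm_conj, hξ, mul_one]; exact hlt
  have hre : (α * (starRingEnd ℂ) ξ).re = δ.re + t := by rw [hrep]; simp
  have him : (α * (starRingEnd ℂ) ξ).im = δ.im := by rw [hrep]; simp
  have hδre : |δ.re| ≤ ‖δ‖ := Complex.abs_re_le_norm δ
  have hδim : |δ.im| ≤ ‖δ‖ := Complex.abs_im_le_norm δ
  have habsα : ‖α‖ < (1 + t) / 2 := by
    have h1 : ‖α‖ ≤ ‖α - (t:ℂ)*ξ‖ + ‖(t:ℂ)*ξ‖ := by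
      simpa using norm_add_le (α - (t:ℂ)*ξ) ((t:ℂ)*ξ)
    have h2 : ‖(t:ℂ)*ξ‖ = t := by
      rw [norm_mul, hξ, Complex.norm_real, Real.norm_eq_abs, _root_.abs_of_nonneg ht0, mul_one]
    have h3 : ‖α - (t:ℂ)*ξ‖ < (1-t)*(1/2) := hlt
    linarith
  refine ⟨by linarith, ?_, ?_⟩
  · rw [him, hre]
    rw [abs_le]
    constructor <;> linarith [abs_le.1 hδre, abs_le.1 hδim]
  · rw [hre]
    have := abs_le.1 hδre
    linarith



set_option maxHeartbeats 1000000 in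
lemma geom_lemma {η : ℝ} (hη : η ∈ Set.Ioo (0:ℝ) 1) {ξ α w : ℂ} (hξ : ‖ξ‖ = 1)
    (hα : α ∈ coneRegion (1/2) ξ) (hw : ‖w - α‖ < η * (1 - ‖α‖)) :
    w ∈ coneRegion (betaConst η) ξ ∧ ‖w‖ < 1 := by
  obtain ⟨hη0, hη1⟩ := hη
  have hM := Mconst_ge_one ⟨hη0, hη1⟩
  set M := Mconst η with hMdef
  set K := 1 + M ^ 2 with hKdef
  have hK : (2:ℝ) ≤ K := by rw [hKdef]; nlinarith [hM]
  set β := betaConst η with hβdef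
  obtain ⟨hb1, hb2⟩ := betaConst_mem ⟨hη0, hη1⟩
  rw [← hβdef] at hb1 hb2
  have hb0 : (0:ℝ) < β := by linarith
  have hKβ : K * (1 - β ^ 2) ≤ 1 := by
    rw [hKdef, hβdef, hMdef]; exact betaConst_key ⟨hη0, hη1⟩
  have h1β : 0 < 1 - β ^ 2 := by
    have h := pow_lt_one₀ hb0.le hb2 (two_ne_zero)
    linarith
  obtain ⟨hα1, F1, F2⟩ := cone_facts hξ hα
  set a := (α * (starRingEnd ℂ) ξ).re with hadef
  set b := (α * (starRingEnd ℂ) ξ).im with hbdef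
  set A := 1 - ‖α‖ with hAdef
  have hA : 0 < A := by rw [hAdef]; linarith
  have hmul : 0 < (1 - η) * A := mul_pos (by linarith) hA
  have hηA : η * A < A := by
    have := mul_lt_mul_of_pos_right hη1 hA
    linarith
  have F3 : A ≤ 1 - a := by
    have h := Complex.re_le_norm (α * (starRingEnd ℂ) ξ)
    rw [norm_mul, Complex.norm_conj, hξ, mul_one] at h
    rw [hAdef, hadef]; linarith
  have he : ‖w - α‖ < η * A := hw
  set E := (w - α) * (starRingEnd ℂ) ξ with hEdef
  have habsconj : ‖E‖ = ‖w - α‖ := by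
    rw [hEdef, norm_mul, Complex.norm_conj, hξ, mul_one]
  have hre2 : |E.re| < η * A := lt_of_le_of_lt (Complex.abs_re_le_norm E) (by rw [habsconj]; exact he)
  have him2 : |E.im| < η * A := lt_of_le_of_lt (Complex.abs_im_le_norm E) (by rw [habsconj]; exact he)
  have hre2a : E.re < η * A := lt_of_abs_lt hre2
  have hre2b : -(η * A) < E.re := neg_lt_of_abs_lt hre2
  set ζ := w * (starRingEnd ℂ) ξ with hζdef
  have hζrep : ζ = α * (starRingEnd ℂ) ξ + E := by rw [hζdef, hEdef]; ring
  set x := ζ.re with hxdef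
  set y := ζ.im with hydef
  have hxeq : x = a + E.re := by rw [hxdef, hζrep, Complex.add_re, hadef]
  have hyeq : y = b + E.im := by rw [hydef, hζrep, Complex.add_im, hbdef]
  set D := 1 - x with hDdef
  have hD1 : (1 - η) * A < D := by rw [hDdef, hxeq]; linarith [F3, hre2a]
  have hDpos : 0 < D := lt_trans hmul hD1
  have hD2 : D < 4 * A := by rw [hDdef, hxeq]; linarith [F2, hre2b, hηA]
  have hy : |y| < M * D := by
    have h1 : |y| < (1 - a) + η * A := by
      rw [hyeq]
      calc |b + E.im| ≤ |b| + |E.im| := abs_add_le _ _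
        _ < (1 - a) + η * A := by linarith [F1, him2]
    have h2 : 1 - a ≤ D + η * A := by rw [hDdef, hxeq]; linarith [hre2b]
    have h4 : |y| < D + 2 * η * A := by linarith
    have h5 : 2 * η * ((1 - η) * A) ≤ 2 * η * D :=
      mul_le_mul_of_nonneg_left hD1.le (by positivity : (0:ℝ) ≤ 2 * η)
    have hne : (1:ℝ) - η ≠ 0 := by linarith
    have h6 : (1 - η) * (M * D) = (1 + η) * D := by
      rw [hMdef, Mconst]
      field_simp
    have h7 : (1 - η) * |y| < (1 - η) * (D + 2 * η * A) :=
      mul_lt_mul_of_pos_left h4 (by linarith : (0:ℝ) < 1 - η)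
    have h8 : (1 - η) * |y| < (1 - η) * (M * D) := by rw [h6]; nlinarith [h5, h7]
    exact (mul_lt_mul_iff_right₀ (show (0:ℝ) < 1 - η by linarith)).mp h8
  have hy2 : y ^ 2 < M ^ 2 * D ^ 2 := by
    have h1 : |y| ^ 2 < (M * D) ^ 2 := by
      apply pow_lt_pow_left₀ hy (abs_nonneg y)
      norm_num
    rw [_root_.sq_abs] at h1
    calc y ^ 2 < (M * D) ^ 2 := h1
      _ = M ^ 2 * D ^ 2 := by ring
  have habsw : ‖w‖ = ‖ζ‖ := by
    rw [hζdef, norm_mul, Complex.norm_conj, hξ, mul_one]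
  have habsα : ‖α‖ = 1 - A := by rw [hAdef]; ring
  have habswlt : ‖w‖ < 1 - (1 - η) * A := by
    have h1 : ‖w‖ ≤ ‖α‖ + ‖w - α‖ := by
      simpa using norm_add_le α (w - α)
    rw [habsα] at h1
    linarith [he]
  have hw1 : ‖w‖ < 1 := by linarith [hmul]
  refine ⟨?_, hw1⟩
  have habst : ∀ t : ℝ, ‖w - (t:ℂ) * ξ‖ = ‖ζ - (t:ℂ)‖ := by
    intro t
    have hcc : ξ * (starRingEnd ℂ) ξ = 1 := by
      rw [Complex.mul_conj, Complex.normSq_eq_norm_sq, hξ]; norm_num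
    have h : ζ - (t:ℂ) = (w - (t:ℂ) * ξ) * (starRingEnd ℂ) ξ := by
      rw [hζdef]
      calc w * (starRingEnd ℂ) ξ - (t:ℂ)
          = w * (starRingEnd ℂ) ξ - (t:ℂ) * (ξ * (starRingEnd ℂ) ξ) := by rw [hcc]; ring
        _ = (w - (t:ℂ) * ξ) * (starRingEnd ℂ) ξ := by ring
    rw [h, norm_mul, Complex.norm_conj, hξ, mul_one]
  rw [mem_coneRegion_iff]
  by_cases hcase : D ≤ 1 - β ^ 2
  · -- conical part
    set s := D / (1 - β ^ 2) with hsdef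
    have hs0 : 0 < s := div_pos hDpos h1β
    have hs1 : s ≤ 1 := by rw [hsdef, div_le_one h1β]; exact hcase
    have hDs : D = s * (1 - β ^ 2) := by rw [hsdef]; field_simp
    refine ⟨1 - s, by linarith, by linarith, ?_⟩
    have ht1s : 1 - (1 - s) = s := by ring
    rw [ht1s, habst]
    have hKD : K * D ^ 2 ≤ s * D := by
      calc K * D ^ 2 = (K * (1 - β ^ 2)) * (s * D) := by rw [hDs]; ring
        _ ≤ 1 * (s * D) := mul_le_mul_of_nonneg_right hKβ (by positivity)
        _ = s * D := by ring
    have e1 : (s - D) ^ 2 + M ^ 2 * D ^ 2 = s ^ 2 - 2 * (s * D) + K * D ^ 2 := by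
      rw [hKdef]; ring
    have e2 : (s * β) ^ 2 = s ^ 2 - s * D := by
      have h : s * D = s ^ 2 * (1 - β ^ 2) := by rw [hDs]; ring
      linear_combination h
    have hsq : ‖ζ - ((1 - s : ℝ) : ℂ)‖ ^ 2 < (s * β) ^ 2 := by
      rw [abs_sub_real_sq]
      have hx1s : (ζ.re - (1 - s)) ^ 2 = (s - D) ^ 2 := by rw [hDdef, hxdef]; ring
      rw [hx1s]
      have h5 : (s - D) ^ 2 + ζ.im ^ 2 < (s - D) ^ 2 + M ^ 2 * D ^ 2 := by
        have : ζ.im ^ 2 < M ^ 2 * D ^ 2 := by rw [← hydef]; exact hy2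
        linarith
      calc (s - D) ^ 2 + ζ.im ^ 2 < (s - D) ^ 2 + M ^ 2 * D ^ 2 := h5
        _ = s ^ 2 - 2 * (s * D) + K * D ^ 2 := e1
        _ ≤ s ^ 2 - 2 * (s * D) + s * D := by linarith [hKD]
        _ = s ^ 2 - s * D := by ring
        _ = (s * β) ^ 2 := e2.symm
    exact lt_of_pow_lt_pow_left₀ 2 (by positivity : (0:ℝ) ≤ s * β) hsq
  · -- ball part
    push_neg at hcase
    refine ⟨0, le_refl _, by norm_num, ?_⟩
    have hgoal : ‖w‖ < β := by
      by_cases hKD : K * D ≤ 1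
      · have e0 : ‖ζ‖ ^ 2 = x ^ 2 + y ^ 2 := by
          rw [Complex.sq_norm, Complex.normSq_apply, hxdef, hydef]; ring
        have e3 : K * D ^ 2 ≤ D := by
          have h := mul_le_mul_of_nonneg_right hKD hDpos.le
          calc K * D ^ 2 = K * D * D := by ring
            _ ≤ 1 * D := h
            _ = D := by ring
        have e6 : x ^ 2 + M ^ 2 * D ^ 2 = 1 - 2 * D + K * D ^ 2 := by
          rw [hKdef, hDdef]; ring
        have e4 : x ^ 2 + y ^ 2 < β ^ 2 := by
          have e7 : 1 - D < β ^ 2 := by linarith [hcase]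
          linarith [hy2, e6, e3]
        have h1 : ‖ζ‖ ^ 2 < β ^ 2 := by rw [e0]; exact e4
        have h2 : ‖ζ‖ < β := lt_of_pow_lt_pow_left₀ 2 hb0.le h1
        rw [habsw]; exact h2
      · push_neg at hKD
        have hDK : 1 / K < D := by
          rw [div_lt_iff₀ (by linarith : (0:ℝ) < K)]
          linarith [hKD]
        have hAK : 1 / (4 * K) < A := by
          have h8 : 1 / (4 * K) < D / 4 := by
            rw [div_lt_div_iff₀ (by linarith : (0:ℝ) < 4 * K) (by norm_num : (0:ℝ) < 4)]
            rw [div_lt_iff₀ (by linarith : (0:ℝ) < K)] at hDK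
            linarith [hDK]
          linarith [hD2, h8]
        have hβval : β = 1 - (1 - η) / (4 * K) := by rw [hβdef, betaConst, hKdef, hMdef]
        rw [hβval]
        have hAK2 : 1 < A * (4 * K) := by
          rw [div_lt_iff₀ (by linarith : (0:ℝ) < 4 * K)] at hAK
          linarith [hAK]
        have h10 : (1 - η) / (4 * K) < (1 - η) * A := by
          rw [div_lt_iff₀ (by linarith : (0:ℝ) < 4 * K)]
          calc 1 - η = (1 - η) * 1 := by ring
            _ < (1 - η) * (A * (4 * K)) :=
                mul_lt_mul_of_pos_left hAK2 (by linarith : (0:ℝ) < 1 - η)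
            _ = (1 - η) * A * (4 * K) := by ring
        exact lt_trans habswlt (sub_lt_sub_left h10 1)
    simpa using hgoal

lemma measurable_indicator_continuousOn {F : ℂ → ℝ} {s : Set ℂ}
    (hs : IsOpen s) (hF : ContinuousOn F s) : Measurable (s.indicator F) := by
  classical
  apply measurable_of_isOpen
  intro u hu
  have h : s.indicator F ⁻¹' u =
      (s ∩ F ⁻¹' u) ∪ (sᶜ ∩ (if (0:ℝ) ∈ u then (univ : Set ℂ) else ∅)) := by
    ext z
    by_cases hz : z ∈ s
    · simp [Set.indicator_of_mem hz, hz]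
    · simp only [Set.mem_preimage, Set.indicator_of_notMem hz, Set.mem_union, Set.mem_inter_iff,
        hz, Set.mem_compl_iff, not_false_iff, true_and, false_and, false_or]
      split <;> simp_all
  rw [h]
  refine MeasurableSet.union ((hF.isOpen_inter_preimage hs hu).measurableSet) ?_
  exact hs.measurableSet.compl.inter (by split <;> simp)

lemma isOpen_unitDisc : IsOpen unitDisc := Metric.isOpen_ball

lemma eDisc_eq_ball (η : ℝ) (α : ℂ) : eDisc η α = Metric.ball α (η * (1 - ‖α‖)) := by
  ext z; simp [eDisc, Metric.mem_ball, Complex.dist_eq]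

lemma eDisc_subset_unitDisc {η : ℝ} (hη : η ∈ Set.Ioo (0:ℝ) 1) {α : ℂ} (hα : α ∈ unitDisc) :
    eDisc η α ⊆ unitDisc := by
  intro z hz
  simp only [unitDisc, Metric.mem_ball, Complex.dist_eq, sub_zero] at hα ⊢
  simp only [eDisc, mem_setOf_eq] at hz
  have h1 : ‖z‖ ≤ ‖α‖ + ‖z - α‖ := by
    simpa using norm_add_le α (z - α)
  nlinarith [hη.1, hη.2, hα]

lemma isOpen_eU (η : ℝ) : IsOpen {q : ℂ × ℂ | ‖q.2 - q.1‖ < η * (1 - ‖q.1‖)} := by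
  apply isOpen_lt
  · exact (continuous_norm.comp (continuous_snd.sub continuous_fst))
  · exact continuous_const.mul (continuous_const.sub (continuous_norm.comp continuous_fst))

lemma volume_ball_complex (α : ℂ) (r : ℝ) (hr : 0 ≤ r) :
    (volume : Measure ℂ) (Metric.ball α r) = ENNReal.ofReal (Real.pi * r ^ 2) := by
  rw [Complex.volume_ball, ENNReal.ofReal_mul Real.pi_nonneg, ENNReal.ofReal_pow hr]
  rw [show ENNReal.ofReal Real.pi = (NNReal.pi : ℝ≥0∞) by
    rw [← NNReal.coe_real_pi, ENNReal.ofReal_coe_nnreal]]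
  ring

lemma mem_unitDisc_s5 {z : ℂ} : z ∈ unitDisc ↔ ‖z‖ < 1 := by
  simp [unitDisc, Metric.mem_ball, Complex.dist_eq]

end AuxLemmas

set_option maxHeartbeats 2000000 in
/-- Lemma on the exceptional set `𝒜`: there are `C₁ = C₁(η) > 0` and
`β ∈ (1/2,1)` such that for every `ε > 0`, holomorphic `f` and `ξ ∈ 𝕋`,
`∫_{𝒜 ∩ Γ_{1/2}(ξ)} |f|^p dm/(1-|z|) ≤ ε C₁ ∫_{Γ_β(ξ)} |f|^p dm/(1-|z|)`. -/
theorem lemma_A_estimate (p : ℝ) (hp : 1 ≤ p) (η : ℝ) (hη : η ∈ Set.Ioo (0:ℝ) 1) :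
    ∃ C₁ > (0:ℝ), ∃ β ∈ Set.Ioo (1/2 : ℝ) 1, ∀ ε > (0:ℝ), ∀ f : ℂ → ℂ,
      DifferentiableOn ℂ f unitDisc → ∀ ξ : ℂ, ‖ξ‖ = 1 →
        (∫⁻ z in {α ∈ unitDisc |
              ENNReal.ofReal (‖f α‖ ^ p) * mA (eDisc η α) <
                ENNReal.ofReal ε *
                  ∫⁻ w in eDisc η α, ENNReal.ofReal (‖f w‖ ^ p) ∂mA} ∩
            coneRegion (1/2) ξ,
            ENNReal.ofReal (‖f z‖ ^ p / (1 - ‖z‖)) ∂mA) ≤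
          ENNReal.ofReal (ε * C₁) *
            ∫⁻ z in coneRegion β ξ,
              ENNReal.ofReal (‖f z‖ ^ p / (1 - ‖z‖)) ∂mA := by
  obtain ⟨hη0, hη1⟩ := hη
  have hp0 : (0:ℝ) ≤ p := le_trans zero_le_one hp
  refine ⟨(1+η)^3/(1-η)^2, div_pos (by positivity) (pow_pos (by linarith) 2), betaConst η, betaConst_mem ⟨hη0, hη1⟩, ?_⟩
  intro ε hε f hf ξ hξ
  obtain ⟨hb1, hb2⟩ := betaConst_mem ⟨hη0, hη1⟩
  set β := betaConst η with hβdef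
  have hπ0 : ENNReal.ofReal Real.pi ≠ 0 := (ENNReal.ofReal_pos.2 Real.pi_pos).ne'
  have hπt : ENNReal.ofReal Real.pi ≠ ⊤ := ENNReal.ofReal_ne_top
  set cP : ℝ≥0∞ := (ENNReal.ofReal Real.pi)⁻¹ with hcP
  have hcPt : cP ≠ ⊤ := ENNReal.inv_ne_top.2 hπ0
  -- the measurable replacement for |f|^p
  have hcont : ContinuousOn (fun w => ‖f w‖ ^ p) unitDisc := by
    apply ContinuousOn.rpow_const
    · exact continuous_norm.comp_continuousOn hf.continuousOn
    · exact fun x _ => Or.inr hp0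
  set G : ℂ → ℝ := unitDisc.indicator (fun w => ‖f w‖ ^ p) with hGdef
  have hGm : Measurable G := measurable_indicator_continuousOn isOpen_unitDisc hcont
  set g : ℂ → ℝ≥0∞ := fun w => ENNReal.ofReal (G w) with hgdef
  have hgm : Measurable g := ENNReal.measurable_ofReal.comp hGm
  have hgt : ∀ w, g w ≠ ⊤ := fun w => ENNReal.ofReal_ne_top
  have hgeq : ∀ w ∈ unitDisc, g w = ENNReal.ofReal (‖f w‖ ^ p) := by
    intro w hw; rw [hgdef]; simp only [hGdef, Set.indicator_of_mem hw]
  -- the joint kernel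
  set U : Set (ℂ × ℂ) := {q | ‖q.2 - q.1‖ < η * (1 - ‖q.1‖)} with hUdef
  have hUopen : IsOpen U := isOpen_eU η
  set Ψ : ℂ × ℂ → ℝ≥0∞ := fun q => U.indicator (fun _ => 1) q * g q.2 with hΨdef
  have hΨm : Measurable Ψ :=
    (measurable_const.indicator hUopen.measurableSet).mul (hgm.comp measurable_snd)
  have hΨeq : ∀ α : ℂ, (∫⁻ w in eDisc η α, g w ∂volume) = ∫⁻ w, Ψ (α, w) ∂volume := by
    intro α
    rw [← lintegral_indicator (eDisc_eq_ball η α ▸ Metric.isOpen_ball.measurableSet) g]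
    apply lintegral_congr
    intro w
    by_cases hw : w ∈ eDisc η α
    · have hU : (α, w) ∈ U := hw
      simp only [hΨdef, Set.indicator_of_mem hw, Set.indicator_of_mem hU, one_mul]
    · have hU : (α, w) ∉ U := hw
      simp only [hΨdef, Set.indicator_of_notMem hw, Set.indicator_of_notMem hU, zero_mul]
  have hJm : Measurable fun α => ∫⁻ w, Ψ (α, w) ∂volume := hΨm.lintegral_prod_right'
  -- measure of eDisc
  have hmA : ∀ α : ℂ, mA (eDisc η α) =
      cP * (ENNReal.ofReal (η * (1 - ‖α‖)) ^ 2 * NNReal.pi) := by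
    intro α
    rw [eDisc_eq_ball, mA, Measure.smul_apply, smul_eq_mul, Complex.volume_ball]
  have hmball : ∀ α ∈ unitDisc, mA (eDisc η α) =
      ENNReal.ofReal ((η * (1 - ‖α‖)) ^ 2) := by
    intro α hα
    have hA : 0 < 1 - ‖α‖ := by rw [mem_unitDisc_s5] at hα; linarith
    rw [eDisc_eq_ball, mA, Measure.smul_apply, smul_eq_mul,
      volume_ball_complex _ _ (by positivity), ENNReal.ofReal_mul Real.pi_nonneg,
      ← mul_assoc, ENNReal.inv_mul_cancel hπ0 hπt, one_mul]
  -- the inner integral rewritten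
  have hIeq : ∀ α ∈ unitDisc,
      (∫⁻ w in eDisc η α, ENNReal.ofReal (‖f w‖ ^ p) ∂mA) =
        cP * ∫⁻ w, Ψ (α, w) ∂volume := by
    intro α hα
    rw [mA, Measure.restrict_smul, lintegral_smul_measure]
    congr 1
    rw [← hΨeq α]
    apply setLIntegral_congr_fun (eDisc_eq_ball η α ▸ Metric.isOpen_ball.measurableSet)
    exact fun w hw => (hgeq w (eDisc_subset_unitDisc ⟨hη0, hη1⟩ hα hw)).symm
  set Aset := {α ∈ unitDisc |
      ENNReal.ofReal (‖f α‖ ^ p) * mA (eDisc η α) <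
        ENNReal.ofReal ε *
          ∫⁻ w in eDisc η α, ENNReal.ofReal (‖f w‖ ^ p) ∂mA} with hAsetdef
  have hAeq : Aset = unitDisc ∩ {α | g α * mA (eDisc η α) <
      ENNReal.ofReal ε * (cP * ∫⁻ w, Ψ (α, w) ∂volume)} := by
    ext α
    simp only [hAsetdef, Set.mem_setOf_eq, Set.mem_inter_iff]
    constructor
    · rintro ⟨h1, h2⟩
      refine ⟨h1, ?_⟩
      rw [hgeq α h1, ← hIeq α h1]
      exact h2
    · rintro ⟨h1, h2⟩
      refine ⟨h1, ?_⟩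
      rw [← hgeq α h1, hIeq α h1]
      exact h2
  have hAmeas : MeasurableSet Aset := by
    rw [hAeq]
    refine isOpen_unitDisc.measurableSet.inter (measurableSet_lt ?_ ?_)
    · apply Measurable.mul hgm
      have : (fun α => mA (eDisc η α)) =
          fun α => cP * (ENNReal.ofReal (η * (1 - ‖α‖)) ^ 2 * NNReal.pi) :=
        funext hmA
      rw [this]
      apply Measurable.const_mul
      apply Measurable.mul_const
      apply Measurable.pow_const
      exact ENNReal.measurable_ofReal.comp
        (continuous_const.mul (continuous_const.sub continuous_norm)).measurable
    · exact (hJm.const_mul cP).const_mul (ENNReal.ofReal ε)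
  set S := Aset ∩ coneRegion (1/2) ξ with hSdef
  have hSmeas : MeasurableSet S := hAmeas.inter isOpen_coneRegion.measurableSet
  set κ : ℂ → ℝ≥0∞ := fun α => ENNReal.ofReal (((1 - ‖α‖) ^ 3)⁻¹) with hκdef
  have hκm : Measurable κ := ENNReal.measurable_ofReal.comp
    ((((continuous_const.sub continuous_norm).pow 3).measurable).inv)
  have hκt : ∀ α, κ α ≠ ⊤ := fun α => ENNReal.ofReal_ne_top
  -- pointwise estimate on S
  have hpoint : ∀ α ∈ S,
      ENNReal.ofReal (‖f α‖ ^ p / (1 - ‖α‖)) ≤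
        (ENNReal.ofReal (ε / η ^ 2) * cP) * (κ α * ∫⁻ w, Ψ (α, w) ∂volume) := by
    rintro α ⟨hαA, _⟩
    rw [hAsetdef] at hαA
    obtain ⟨hαD, hlt⟩ := hαA
    have hA : 0 < 1 - ‖α‖ := by rw [mem_unitDisc_s5] at hαD; linarith
    set A := 1 - ‖α‖ with hAdef
    set J := ∫⁻ w, Ψ (α, w) ∂volume with hJdef
    have hlt' : ENNReal.ofReal (‖f α‖ ^ p) * ENNReal.ofReal ((η * A) ^ 2) ≤
        ENNReal.ofReal ε * (cP * J) := by
      rw [← hmball α hαD, ← hIeq α hαD]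
      exact hlt.le
    have hm0 : ENNReal.ofReal ((η * A) ^ 2) ≠ 0 := (ENNReal.ofReal_pos.2 (by positivity)).ne'
    have hmt : ENNReal.ofReal ((η * A) ^ 2) ≠ ⊤ := ENNReal.ofReal_ne_top
    have hX : ENNReal.ofReal (‖f α‖ ^ p) ≤
        (ENNReal.ofReal ε * (cP * J)) * (ENNReal.ofReal ((η * A) ^ 2))⁻¹ := by
      rw [← ENNReal.le_div_iff_mul_le (Or.inl hm0) (Or.inl hmt)] at hlt'
      rw [ENNReal.div_eq_inv_mul] at hlt'
      calc ENNReal.ofReal (‖f α‖ ^ p) ≤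
          (ENNReal.ofReal ((η * A) ^ 2))⁻¹ * (ENNReal.ofReal ε * (cP * J)) := hlt'
        _ = (ENNReal.ofReal ε * (cP * J)) * (ENNReal.ofReal ((η * A) ^ 2))⁻¹ := mul_comm _ _
    have hfp0 : 0 ≤ ‖f α‖ ^ p := Real.rpow_nonneg (norm_nonneg _) p
    calc ENNReal.ofReal (‖f α‖ ^ p / A)
        = ENNReal.ofReal (‖f α‖ ^ p) * ENNReal.ofReal A⁻¹ := by
          rw [div_eq_mul_inv, ENNReal.ofReal_mul hfp0]
      _ ≤ ((ENNReal.ofReal ε * (cP * J)) * (ENNReal.ofReal ((η * A) ^ 2))⁻¹) *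
            ENNReal.ofReal A⁻¹ := mul_le_mul_left hX _
      _ = (ENNReal.ofReal ε * ENNReal.ofReal (((η * A) ^ 2)⁻¹) * ENNReal.ofReal A⁻¹) *
            (cP * J) := by
          rw [← ENNReal.ofReal_inv_of_pos (by positivity : (0:ℝ) < (η * A) ^ 2)]
          ring
      _ = (ENNReal.ofReal (ε / η ^ 2) * ENNReal.ofReal ((A ^ 3)⁻¹)) * (cP * J) := by
          congr 1
          have hηne : η ≠ 0 := ne_of_gt hη0
          have hAne : A ≠ 0 := ne_of_gt hA
          have hreal : ε * ((η * A) ^ 2)⁻¹ * A⁻¹ = (ε / η ^ 2) * (A ^ 3)⁻¹ := by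
            field_simp
            all_goals try ring
            all_goals tauto
          rw [← ENNReal.ofReal_mul hε.le,
            ← ENNReal.ofReal_mul (mul_nonneg hε.le (by positivity)), hreal,
            ENNReal.ofReal_mul (by positivity)]
      _ = (ENNReal.ofReal (ε / η ^ 2) * cP) * (κ α * J) := by
          rw [hκdef]
          ring
  -- the kernel estimate
  have hkern : ∀ w : ℂ,
      (∫⁻ α, S.indicator (fun _ => (1:ℝ≥0∞)) α * κ α * U.indicator (fun _ => 1) (α, w) ∂volume) ≤
        (coneRegion β ξ).indicator
          (fun w => ENNReal.ofReal
            ((Real.pi * η ^ 2 * (1 + η) ^ 3 / (1 - η) ^ 2) * (1 - ‖w‖)⁻¹)) w := by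
    intro w
    by_cases hwΓ : w ∈ coneRegion β ξ
    · rw [Set.indicator_of_mem hwΓ]
      have hw1 : ‖w‖ < 1 := by
        have := coneRegion_subset_unitDisc (le_of_lt hb2) hξ hwΓ
        rwa [mem_unitDisc_s5] at this
      have hw1' : 0 < 1 - ‖w‖ := by linarith
      set R := (η / (1 - η)) * (1 - ‖w‖) with hRdef
      have hR0 : 0 ≤ R := by
        rw [hRdef]
        exact mul_nonneg (div_nonneg hη0.le (by linarith)) hw1'.le
      have hb : ∀ α : ℂ, S.indicator (fun _ => (1:ℝ≥0∞)) α * κ α *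
          U.indicator (fun _ => 1) (α, w) ≤
          (Metric.ball w R).indicator
            (fun _ => ENNReal.ofReal ((1 + η) ^ 3 * ((1 - ‖w‖) ^ 3)⁻¹)) α := by
        intro α
        by_cases hαS : α ∈ S
        · by_cases hαU : (α, w) ∈ U
          · have hαD : α ∈ unitDisc := hαS.1.1
            have hA : 0 < 1 - ‖α‖ := by
              rw [mem_unitDisc_s5] at hαD; linarith
            have habs : ‖w - α‖ < η * (1 - ‖α‖) := hαU
            have htri1 : ‖w‖ ≤ ‖α‖ + ‖w - α‖ := by
              simpa using norm_add_le α (w - α)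
            have htri2 : ‖α‖ ≤ ‖w‖ + ‖w - α‖ := by
              have h1 : ‖α - w‖ = ‖w - α‖ := by
                rw [← norm_neg (α - w)]; ring_nf
              calc ‖α‖ = ‖w + (α - w)‖ := by ring_nf
                _ ≤ ‖w‖ + ‖α - w‖ := norm_add_le _ _
                _ = ‖w‖ + ‖w - α‖ := by rw [h1]
            have hi : (1 - η) * (1 - ‖α‖) < 1 - ‖w‖ := by nlinarith
            have hii : 1 - ‖w‖ < (1 + η) * (1 - ‖α‖) := by nlinarith
            have hαball : α ∈ Metric.ball w R := by
              rw [Metric.mem_ball, Complex.dist_eq]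
              have h1 : ‖α - w‖ = ‖w - α‖ := by
                rw [← norm_neg (α - w)]; ring_nf
              rw [h1, hRdef]
              have h2 : 1 - ‖α‖ < (1 - ‖w‖) / (1 - η) := by
                rw [lt_div_iff₀ (by linarith : (0:ℝ) < 1 - η)]
                linarith [hi]
              calc ‖w - α‖ < η * (1 - ‖α‖) := habs
                _ < η * ((1 - ‖w‖) / (1 - η)) :=
                    mul_lt_mul_of_pos_left h2 hη0
                _ = η / (1 - η) * (1 - ‖w‖) := by ring
            rw [Set.indicator_of_mem hαball, Set.indicator_of_mem hαS,
              Set.indicator_of_mem hαU, one_mul, mul_one, hκdef]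
            apply ENNReal.ofReal_le_ofReal
            have h3 : (1 - ‖w‖) ^ 3 ≤ (1 + η) ^ 3 * (1 - ‖α‖) ^ 3 := by
              have h4 := pow_le_pow_left₀ hw1'.le hii.le 3
              rw [mul_pow] at h4
              exact h4
            rw [inv_eq_one_div, inv_eq_one_div, mul_one_div, div_le_div_iff₀ (by positivity) (by positivity)]
            linarith [h3]
          · rw [Set.indicator_of_notMem hαU, mul_zero]
            exact bot_le
        · rw [Set.indicator_of_notMem hαS, zero_mul, zero_mul]
          exact bot_le
      calc (∫⁻ α, S.indicator (fun _ => (1:ℝ≥0∞)) α * κ α *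
              U.indicator (fun _ => 1) (α, w) ∂volume)
          ≤ ∫⁻ α, (Metric.ball w R).indicator
              (fun _ => ENNReal.ofReal ((1 + η) ^ 3 * ((1 - ‖w‖) ^ 3)⁻¹)) α ∂volume :=
            lintegral_mono hb
        _ = ENNReal.ofReal ((1 + η) ^ 3 * ((1 - ‖w‖) ^ 3)⁻¹) *
              volume (Metric.ball w R) := lintegral_indicator_const Metric.isOpen_ball.measurableSet _
        _ = ENNReal.ofReal
              ((Real.pi * η ^ 2 * (1 + η) ^ 3 / (1 - η) ^ 2) * (1 - ‖w‖)⁻¹) := by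
            rw [volume_ball_complex _ _ hR0, ← ENNReal.ofReal_mul (by positivity)]
            congr 1
            rw [hRdef]
            have hne1 : (1:ℝ) - ‖w‖ ≠ 0 := ne_of_gt hw1'
            have hne2 : (1:ℝ) - η ≠ 0 := by intro h; rw [sub_eq_zero] at h; exact (ne_of_lt hη1) h.symm
            field_simp
    · rw [Set.indicator_of_notMem hwΓ]
      have hz : ∀ α : ℂ, S.indicator (fun _ => (1:ℝ≥0∞)) α * κ α *
          U.indicator (fun _ => 1) (α, w) = 0 := by
        intro α
        by_cases hαS : α ∈ S
        · by_cases hαU : (α, w) ∈ U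
          · exfalso
            apply hwΓ
            have habs : ‖w - α‖ < η * (1 - ‖α‖) := hαU
            exact (geom_lemma ⟨hη0, hη1⟩ hξ hαS.2 habs).1
          · rw [Set.indicator_of_notMem hαU, mul_zero]
        · rw [Set.indicator_of_notMem hαS, zero_mul, zero_mul]
      calc (∫⁻ α, S.indicator (fun _ => (1:ℝ≥0∞)) α * κ α *
              U.indicator (fun _ => 1) (α, w) ∂volume)
          = ∫⁻ _ : ℂ, (0:ℝ≥0∞) ∂volume := lintegral_congr hz
        _ = 0 := lintegral_zero
        _ ≤ 0 := le_refl _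
  -- final assembly
  set Cre : ℝ := Real.pi * η ^ 2 * (1 + η) ^ 3 / (1 - η) ^ 2 with hCre
  set V := ∫⁻ z in coneRegion β ξ,
      ENNReal.ofReal (‖f z‖ ^ p / (1 - ‖z‖)) ∂volume with hV
  have hRHS : (∫⁻ z in coneRegion β ξ,
      ENNReal.ofReal (‖f z‖ ^ p / (1 - ‖z‖)) ∂mA) = cP * V := by
    rw [mA, Measure.restrict_smul, lintegral_smul_measure, smul_eq_mul, hV]
  have hLHS : (∫⁻ z in S,
      ENNReal.ofReal (‖f z‖ ^ p / (1 - ‖z‖)) ∂mA) =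
      cP * ∫⁻ z in S, ENNReal.ofReal (‖f z‖ ^ p / (1 - ‖z‖)) ∂volume := by
    rw [mA, Measure.restrict_smul, lintegral_smul_measure, smul_eq_mul]
  set c₂ := ENNReal.ofReal (ε / η ^ 2) * cP with hc₂
  have hc₂t : c₂ ≠ ⊤ := ENNReal.mul_ne_top ENNReal.ofReal_ne_top hcPt
  have hstep2 : (∫⁻ z in S,
      ENNReal.ofReal (‖f z‖ ^ p / (1 - ‖z‖)) ∂volume) ≤
      ∫⁻ α in S, c₂ * (κ α * ∫⁻ w, Ψ (α, w) ∂volume) ∂volume :=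
    setLIntegral_mono' hSmeas hpoint
  have hstep3 : (∫⁻ α in S, c₂ * (κ α * ∫⁻ w, Ψ (α, w) ∂volume) ∂volume) =
      c₂ * ∫⁻ α in S, κ α * ∫⁻ w, Ψ (α, w) ∂volume ∂volume :=
    lintegral_const_mul' c₂ _ hc₂t
  have hind : ∀ α : ℂ, S.indicator (fun _ => (1:ℝ≥0∞)) α ≠ ⊤ := by
    intro α; by_cases h : α ∈ S <;> simp [h]
  have hH : ∀ α : ℂ, S.indicator (fun _ => (1:ℝ≥0∞)) α * (κ α * ∫⁻ w, Ψ (α, w) ∂volume) =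
      ∫⁻ w, S.indicator (fun _ => (1:ℝ≥0∞)) α * κ α *
        U.indicator (fun _ => 1) (α, w) * g w ∂volume := by
    intro α
    have hne : S.indicator (fun _ => (1:ℝ≥0∞)) α * κ α ≠ ⊤ :=
      ENNReal.mul_ne_top (hind α) (hκt α)
    calc S.indicator (fun _ => (1:ℝ≥0∞)) α * (κ α * ∫⁻ w, Ψ (α, w) ∂volume)
        = (S.indicator (fun _ => (1:ℝ≥0∞)) α * κ α) * ∫⁻ w, Ψ (α, w) ∂volume := by ring
      _ = ∫⁻ w, (S.indicator (fun _ => (1:ℝ≥0∞)) α * κ α) * Ψ (α, w) ∂volume :=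
          (lintegral_const_mul' _ _ hne).symm
      _ = ∫⁻ w, S.indicator (fun _ => (1:ℝ≥0∞)) α * κ α *
            U.indicator (fun _ => 1) (α, w) * g w ∂volume := by
          apply lintegral_congr
          intro w
          simp only [hΨdef]
          ring
  have hT : (∫⁻ α in S, κ α * ∫⁻ w, Ψ (α, w) ∂volume ∂volume) =
      ∫⁻ α, ∫⁻ w, S.indicator (fun _ => (1:ℝ≥0∞)) α * κ α *
        U.indicator (fun _ => 1) (α, w) * g w ∂volume ∂volume := by
    rw [← lintegral_indicator hSmeas]
    apply lintegral_congr
    intro α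
    by_cases hα : α ∈ S
    · rw [Set.indicator_of_mem hα, ← hH α, Set.indicator_of_mem hα, one_mul]
    · rw [Set.indicator_of_notMem hα, ← hH α, Set.indicator_of_notMem hα, zero_mul]
  have hHm : Measurable fun q : ℂ × ℂ => S.indicator (fun _ => (1:ℝ≥0∞)) q.1 * κ q.1 *
      U.indicator (fun _ => 1) q * g q.2 :=
    ((((measurable_const.indicator hSmeas).comp measurable_fst).mul
      (hκm.comp measurable_fst)).mul
        (measurable_const.indicator hUopen.measurableSet)).mul (hgm.comp measurable_snd)
  have hswap : (∫⁻ α, ∫⁻ w, S.indicator (fun _ => (1:ℝ≥0∞)) α * κ α *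
        U.indicator (fun _ => 1) (α, w) * g w ∂volume ∂volume) =
      ∫⁻ w, ∫⁻ α, S.indicator (fun _ => (1:ℝ≥0∞)) α * κ α *
        U.indicator (fun _ => 1) (α, w) * g w ∂volume ∂volume :=
    lintegral_lintegral_swap hHm.aemeasurable
  have hstep4 : (∫⁻ w, ∫⁻ α, S.indicator (fun _ => (1:ℝ≥0∞)) α * κ α *
        U.indicator (fun _ => 1) (α, w) * g w ∂volume ∂volume) ≤
      ∫⁻ w, (coneRegion β ξ).indicator
        (fun w => ENNReal.ofReal (Cre * (1 - ‖w‖)⁻¹)) w * g w ∂volume := by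
    apply lintegral_mono
    intro w
    calc (∫⁻ α, S.indicator (fun _ => (1:ℝ≥0∞)) α * κ α *
            U.indicator (fun _ => 1) (α, w) * g w ∂volume)
        = (∫⁻ α, S.indicator (fun _ => (1:ℝ≥0∞)) α * κ α *
            U.indicator (fun _ => 1) (α, w) ∂volume) * g w :=
          lintegral_mul_const' _ _ (hgt w)
      _ ≤ (coneRegion β ξ).indicator
            (fun w => ENNReal.ofReal (Cre * (1 - ‖w‖)⁻¹)) w * g w :=
          mul_le_mul_left (hkern w) (g w)
  have hstep5 : (∫⁻ w, (coneRegion β ξ).indicator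
        (fun w => ENNReal.ofReal (Cre * (1 - ‖w‖)⁻¹)) w * g w ∂volume) =
      ENNReal.ofReal Cre * V := by
    have h1 : ∀ w : ℂ, (coneRegion β ξ).indicator
        (fun w => ENNReal.ofReal (Cre * (1 - ‖w‖)⁻¹)) w * g w =
        (coneRegion β ξ).indicator
          (fun w => ENNReal.ofReal (Cre * (1 - ‖w‖)⁻¹) * g w) w := by
      intro w
      by_cases hw : w ∈ coneRegion β ξ
      · rw [Set.indicator_of_mem hw, Set.indicator_of_mem hw]
      · rw [Set.indicator_of_notMem hw, Set.indicator_of_notMem hw, zero_mul]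
    have hCre0 : 0 ≤ Cre := by
      rw [hCre]
      apply div_nonneg (by positivity) (by positivity)
    have h2 : ∀ w ∈ coneRegion β ξ, ENNReal.ofReal (Cre * (1 - ‖w‖)⁻¹) * g w =
        ENNReal.ofReal Cre * ENNReal.ofReal (‖f w‖ ^ p / (1 - ‖w‖)) := by
      intro w hw
      have hwD : w ∈ unitDisc := coneRegion_subset_unitDisc hb2.le hξ hw
      have hw1 : ‖w‖ < 1 := mem_unitDisc_s5.1 hwD
      have hfp0 : 0 ≤ ‖f w‖ ^ p := Real.rpow_nonneg (norm_nonneg _) p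
      rw [hgeq w hwD,
        ← ENNReal.ofReal_mul (mul_nonneg hCre0 (inv_nonneg.2 (by linarith : (0:ℝ) ≤ 1 - ‖w‖))),
        ← ENNReal.ofReal_mul hCre0]
      congr 1
      rw [div_eq_mul_inv]
      ring
    rw [lintegral_congr h1, lintegral_indicator isOpen_coneRegion.measurableSet,
      setLIntegral_congr_fun isOpen_coneRegion.measurableSet h2,
      lintegral_const_mul' _ _ ENNReal.ofReal_ne_top, hV]
  have hconst : cP * (c₂ * (ENNReal.ofReal Cre * V)) =
      ENNReal.ofReal (ε * ((1 + η) ^ 3 / (1 - η) ^ 2)) * (cP * V) := by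
    have hne2 : (1:ℝ) - η ≠ 0 := by intro h; rw [sub_eq_zero] at h; exact (ne_of_lt hη1) h.symm
    have hηne : η ≠ 0 := ne_of_gt hη0
    have h1 : ENNReal.ofReal (ε / η ^ 2) * ENNReal.ofReal Cre =
        ENNReal.ofReal Real.pi * ENNReal.ofReal (ε * ((1 + η) ^ 3 / (1 - η) ^ 2)) := by
      rw [← ENNReal.ofReal_mul (div_nonneg hε.le (by positivity)),
        ← ENNReal.ofReal_mul Real.pi_nonneg]
      congr 1
      rw [hCre]
      field_simp
    calc cP * (c₂ * (ENNReal.ofReal Cre * V))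
        = (ENNReal.ofReal (ε / η ^ 2) * ENNReal.ofReal Cre) * (cP * (cP * V)) := by
          rw [hc₂]; ring
      _ = (ENNReal.ofReal Real.pi *
            ENNReal.ofReal (ε * ((1 + η) ^ 3 / (1 - η) ^ 2))) * (cP * (cP * V)) := by rw [h1]
      _ = (ENNReal.ofReal Real.pi * cP) *
            (ENNReal.ofReal (ε * ((1 + η) ^ 3 / (1 - η) ^ 2)) * (cP * V)) := by ring
      _ = ENNReal.ofReal (ε * ((1 + η) ^ 3 / (1 - η) ^ 2)) * (cP * V) := by
          rw [hcP, ENNReal.mul_inv_cancel hπ0 hπt, one_mul]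
  calc (∫⁻ z in S, ENNReal.ofReal (‖f z‖ ^ p / (1 - ‖z‖)) ∂mA)
      = cP * ∫⁻ z in S,
          ENNReal.ofReal (‖f z‖ ^ p / (1 - ‖z‖)) ∂volume := hLHS
    _ ≤ cP * (c₂ * (ENNReal.ofReal Cre * V)) := by
        apply mul_le_mul_right
        calc (∫⁻ z in S,
              ENNReal.ofReal (‖f z‖ ^ p / (1 - ‖z‖)) ∂volume)
            ≤ ∫⁻ α in S, c₂ * (κ α * ∫⁻ w, Ψ (α, w) ∂volume) ∂volume := hstep2
          _ = c₂ * ∫⁻ α in S, κ α * ∫⁻ w, Ψ (α, w) ∂volume ∂volume := hstep3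
          _ = c₂ * ∫⁻ α, ∫⁻ w, S.indicator (fun _ => (1:ℝ≥0∞)) α * κ α *
                U.indicator (fun _ => 1) (α, w) * g w ∂volume ∂volume := by rw [hT]
          _ = c₂ * ∫⁻ w, ∫⁻ α, S.indicator (fun _ => (1:ℝ≥0∞)) α * κ α *
                U.indicator (fun _ => 1) (α, w) * g w ∂volume ∂volume := by rw [hswap]
          _ ≤ c₂ * ∫⁻ w, (coneRegion β ξ).indicator
                (fun w => ENNReal.ofReal (Cre * (1 - ‖w‖)⁻¹)) w * g w ∂volume :=
              mul_le_mul_right hstep4 c₂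
          _ = c₂ * (ENNReal.ofReal Cre * V) := by rw [hstep5]
    _ = ENNReal.ofReal (ε * ((1 + η) ^ 3 / (1 - η) ^ 2)) * (cP * V) := hconst
    _ = ENNReal.ofReal (ε * ((1 + η) ^ 3 / (1 - η) ^ 2)) *
          ∫⁻ z in coneRegion β ξ,
            ENNReal.ofReal (‖f z‖ ^ p / (1 - ‖z‖)) ∂mA := by rw [hRHS]
end
end

section
/- Let 1 ≤ p, q < ∞, let λ > max{1, p/q} and γ > (λ+2)/p be fixed, and for α ∈ 𝔻 let f_α(z) = (1−|α|²)^{γ − 1/p − 1/q} / (1 − ᾱz)^γ. Then for every η ∈ (0,1) there is a constant C > 0, independent of α and of the measurable set G ⊆ 𝔻, such that for every measurable G ⊆ 𝔻 and every α ∈ 𝔻, ‖f_α · χ_{G ∩ Δ(α,η)}‖_{T_p^q} ≤ C (m(G ∩ Δ(α,η)) / m(Δ(α,η)))^{1/p}. -/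
open MeasureTheory Complex Set
open scoped Real ENNReal

noncomputable section
set_option maxHeartbeats 1600000

lemma normSq_identity (α z : ℂ) :
    Complex.normSq (1 - (starRingEnd ℂ) α * z) - Complex.normSq (α - z)
      = (1 - Complex.normSq α) * (1 - Complex.normSq z) := by
  simp only [Complex.normSq_apply, Complex.sub_re, Complex.sub_im, Complex.mul_re,
    Complex.mul_im, Complex.one_re, Complex.one_im, Complex.conj_re, Complex.conj_im]
  ring

lemma abs_identity (α z : ℂ) :
    ‖1 - (starRingEnd ℂ) α * z‖ ^ 2 - ‖α - z‖ ^ 2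
      = (1 - ‖α‖ ^ 2) * (1 - ‖z‖ ^ 2) := by
  rw [Complex.sq_norm, Complex.sq_norm, Complex.sq_norm, Complex.sq_norm]
  exact normSq_identity α z

lemma pdisc_bounds {α : ℂ} (hα : ‖α‖ < 1) {η : ℝ} (hη0 : 0 < η) (hη1 : η < 1)
    {z : ℂ} (hz : z ∈ pDisc α η) :
    (1-η) * ‖α - z‖ ≤ 2*η*(1 - ‖α‖) ∧
    (1-η^2)/4 * (1 - ‖α‖) ≤ 1 - ‖z‖ ∧
    (1-η) * (1 - ‖z‖) ≤ 3*(1 - ‖α‖) ∧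
    1 - ‖α‖ ≤ ‖1 - (starRingEnd ℂ) α * z‖ ∧
    ‖z‖ < 1 := by
  obtain ⟨hz1, hz2⟩ := hz
  have hz1' : ‖z‖ < 1 := by
    simpa [unitDisc, Complex.dist_eq] using hz1
  have ha0 : 0 ≤ ‖α‖ := norm_nonneg α
  have habsz : ‖(starRingEnd ℂ) α * z‖ = ‖α‖ * ‖z‖ := by
    rw [norm_mul, Complex.norm_conj]
  have hw_ge : 1 - ‖α‖ ≤ ‖1 - (starRingEnd ℂ) α * z‖ := by
    have h1 : ‖(1 - (starRingEnd ℂ) α * z) + (starRingEnd ℂ) α * z‖ = 1 := by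
      simp
    have h2 := norm_add_le (1 - (starRingEnd ℂ) α * z) ((starRingEnd ℂ) α * z)
    rw [h1, habsz] at h2
    nlinarith [norm_nonneg z, hz1'.le]
  have hw0 : (0:ℝ) < ‖1 - (starRingEnd ℂ) α * z‖ := by linarith
  have hmem : ‖α - z‖ < η * ‖1 - (starRingEnd ℂ) α * z‖ := by
    rw [norm_div] at hz2
    exact (div_lt_iff₀ hw0).mp hz2
  have hconj : (starRingEnd ℂ) α * α = ((‖α‖ : ℂ))^2 := by
    rw [Complex.conj_mul']
  have hwexp : 1 - (starRingEnd ℂ) α * z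
      = ((1 - ‖α‖ ^2 : ℝ) : ℂ) + (starRingEnd ℂ) α * (α - z) := by
    push_cast
    linear_combination -hconj
  have hw_le : (1-η) * ‖1 - (starRingEnd ℂ) α * z‖ ≤ 2 * (1 - ‖α‖) := by
    have h3 : ‖1 - (starRingEnd ℂ) α * z‖
        ≤ (1 - ‖α‖^2) + ‖α‖ * ‖α - z‖ := by
      calc ‖1 - (starRingEnd ℂ) α * z‖
          ≤ ‖((1 - ‖α‖^2 : ℝ) : ℂ)‖
            + ‖(starRingEnd ℂ) α * (α - z)‖ := by
            nth_rewrite 1 [hwexp]; exact norm_add_le _ _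
        _ = |1 - ‖α‖^2| + ‖α‖ * ‖α - z‖ := by
            rw [Complex.norm_real, Real.norm_eq_abs, norm_mul, Complex.norm_conj]
        _ = (1 - ‖α‖^2) + ‖α‖ * ‖α - z‖ := by
            rw [_root_.abs_of_nonneg (by nlinarith)]
    nlinarith [norm_nonneg (α - z)]
  refine ⟨?_, ?_, ?_, hw_ge, hz1'⟩
  · nlinarith [norm_nonneg (α - z)]
  · have hid := abs_identity α z
    have hns : ‖α - z‖^2
        ≤ η^2 * ‖1 - (starRingEnd ℂ) α * z‖^2 := by
      nlinarith [norm_nonneg (α - z)]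
    have hww : (1 - ‖α‖) * (1 - ‖α‖)
        ≤ ‖1 - (starRingEnd ℂ) α * z‖^2 := by
      nlinarith [hw_ge, hα]
    have hkey : (1 - η^2) * ((1 - ‖α‖) * (1 - ‖α‖))
        ≤ (1 - ‖α‖^2) * (1 - ‖z‖^2) := by
      have h5 : (1 - η^2) * ((1 - ‖α‖) * (1 - ‖α‖))
          ≤ (1 - η^2) * ‖1 - (starRingEnd ℂ) α * z‖^2 :=
        mul_le_mul_of_nonneg_left hww (by nlinarith)
      nlinarith [hns, hid]
    have f1 : 1 - ‖α‖^2 ≤ 2*(1 - ‖α‖) := by nlinarith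
    have f2 : 1 - ‖z‖^2 ≤ 2*(1 - ‖z‖) := by
      nlinarith [norm_nonneg z]
    have f3 : (0:ℝ) ≤ 1 - ‖z‖^2 := by nlinarith [norm_nonneg z]
    have f4 : (0:ℝ) < 1 - ‖α‖ := by linarith
    have f5 : (1 - ‖α‖^2) * (1 - ‖z‖^2)
        ≤ (2*(1 - ‖α‖)) * (2*(1 - ‖z‖)) :=
      mul_le_mul f1 f2 f3 (by linarith)
    have f6 : (1 - η^2) * ((1 - ‖α‖) * (1 - ‖α‖))
        ≤ 4*(1 - ‖α‖)*(1 - ‖z‖) := by nlinarith [hkey, f5]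
    nlinarith [f6, f4, mul_pos f4 f4]
  · have h4 : ‖α‖ - ‖z‖ ≤ ‖α - z‖ := by
      calc ‖α‖ - ‖z‖ ≤ |‖α‖ - ‖z‖| := le_abs_self _
        _ ≤ ‖α - z‖ := abs_norm_sub_norm_le α z
    nlinarith [norm_nonneg (α - z)]

lemma cone_dist {ξ w : ℂ} (hξ : ‖ξ‖ = 1) (hw : w ∈ coneRegion (1/2) ξ) :
    ‖w - ξ‖ ≤ 3 * (1 - ‖w‖) := by
  have htri : ‖w - ξ‖ ≤ ‖w‖ + 1 := by
    calc ‖w - ξ‖ ≤ ‖w‖ + ‖ξ‖ := by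
          simpa using norm_sub_le w ξ
      _ = ‖w‖ + 1 := by rw [hξ]
  rcases hw with h | h
  · simp only [Set.mem_setOf_eq] at h
    linarith
  · simp only [Set.mem_iUnion, Set.mem_setOf_eq] at h
    obtain ⟨z, hz, t, ht0, ht1, rfl⟩ := h
    have h1 : (1 - (t:ℂ)) * z + (t:ℂ) * ξ - ξ = ((1 - t : ℝ) : ℂ) * (z - ξ) := by
      push_cast; ring
    have h2 : ‖(1 - (t:ℂ)) * z + (t:ℂ) * ξ - ξ‖
        = (1 - t) * ‖z - ξ‖ := by
      rw [h1, norm_mul, Complex.norm_real, Real.norm_eq_abs, _root_.abs_of_nonneg (by linarith)]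
    have h3 : ‖z - ξ‖ ≤ 3/2 := by
      calc ‖z - ξ‖ ≤ ‖z‖ + ‖ξ‖ := by
            simpa using norm_sub_le z ξ
        _ ≤ 3/2 := by rw [hξ]; linarith [hz]
    have h4 : ‖(1 - (t:ℂ)) * z + (t:ℂ) * ξ‖ ≤ (1 - t) * ‖z‖ + t := by
      calc ‖(1 - (t:ℂ)) * z + (t:ℂ) * ξ‖
          ≤ ‖(1 - (t:ℂ)) * z‖ + ‖(t:ℂ) * ξ‖ := norm_add_le _ _
        _ = (1 - t) * ‖z‖ + t := by
            rw [norm_mul, norm_mul, hξ, mul_one]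
            have e1 : ‖1 - (t:ℂ)‖ = 1 - t := by
              rw [show (1 - (t:ℂ)) = ((1 - t : ℝ) : ℂ) by push_cast; ring,
                Complex.norm_real, Real.norm_eq_abs, _root_.abs_of_nonneg (by linarith)]
            have e2 : ‖(t:ℂ)‖ = t := by
              rw [Complex.norm_real, Real.norm_eq_abs, _root_.abs_of_nonneg ht0]
            rw [e1, e2]
    rw [h2]
    have hz0 : 0 ≤ ‖z‖ := norm_nonneg z
    nlinarith [norm_nonneg (z - ξ), hz.le]

lemma chord (θ φ : ℝ) :
    ‖Complex.exp (θ * Complex.I) - Complex.exp (φ * Complex.I)‖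
      = 2 * |Real.sin ((θ - φ)/2)| := by
  have h : Complex.normSq (Complex.exp (θ * Complex.I) - Complex.exp (φ * Complex.I))
      = 2 - 2 * Real.cos (θ - φ) := by
    simp only [Complex.normSq_apply, Complex.sub_re, Complex.sub_im,
      Complex.exp_ofReal_mul_I_re, Complex.exp_ofReal_mul_I_im]
    rw [Real.cos_sub]
    nlinarith [Real.sin_sq_add_cos_sq θ, Real.sin_sq_add_cos_sq φ]
  rw [Complex.norm_def, h, Real.abs_sin_half]
  rw [show (2:ℝ) - 2 * Real.cos (θ - φ) = 4 * ((1 - Real.cos (θ - φ))/2) by ring]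
  rw [show (4:ℝ) = 2^2 by norm_num, Real.sqrt_mul (by positivity), Real.sqrt_sq (by norm_num)]

lemma jordan {x : ℝ} (hx : |x| ≤ Real.pi/2) : 2/Real.pi * |x| ≤ |Real.sin x| := by
  rcases le_or_gt 0 x with h0 | h0
  · rw [_root_.abs_of_nonneg h0]
    calc 2/Real.pi * x ≤ Real.sin x := Real.mul_le_sin h0 (by rwa [_root_.abs_of_nonneg h0] at hx)
      _ ≤ |Real.sin x| := le_abs_self _
  · rw [_root_.abs_of_neg h0]
    have hx' : -x ≤ Real.pi/2 := by rwa [_root_.abs_of_neg h0] at hx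
    calc 2/Real.pi * (-x) ≤ Real.sin (-x) := Real.mul_le_sin (by linarith) hx'
      _ = -Real.sin x := Real.sin_neg x
      _ ≤ |Real.sin x| := neg_le_abs _

lemma arc_mem {θ φ R' : ℝ} (hθ : θ ∈ Set.Ioo 0 (2*Real.pi)) (hφ1 : -Real.pi < φ)
    (hφ2 : φ ≤ Real.pi) (h : 2 * |Real.sin ((θ - φ)/2)| ≤ R') :
    θ ∈ Metric.closedBall φ ((Real.pi/2) * R')
      ∪ Metric.closedBall (φ + 2*Real.pi) ((Real.pi/2) * R') := by
  obtain ⟨hθ1, hθ2⟩ := hθ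
  have hπ := Real.pi_pos
  set y := (θ - φ)/2 with hy
  have hy1 : -(Real.pi/2) < y := by rw [hy]; linarith
  have hy2 : y < 3*Real.pi/2 := by rw [hy]; linarith
  rcases le_or_gt y (Real.pi/2) with hc | hc
  · left
    rw [Metric.mem_closedBall, Real.dist_eq]
    have hj := jordan (x := y) (by rw [abs_le]; constructor <;> linarith)
    have hsin : |Real.sin y| ≤ R'/2 := by linarith
    have : |y| ≤ Real.pi/2 * (R'/2) := by
      have h2 : 2/Real.pi * |y| ≤ R'/2 := le_trans hj hsin
      have h4 := mul_le_mul_of_nonneg_left h2 hπ.le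
      have h5 : Real.pi * (2/Real.pi*|y|) = 2*|y| := by field_simp
      linarith
    have hty : θ - φ = 2*y := by rw [hy]; ring
    rw [hty, abs_mul, _root_.abs_of_nonneg (by norm_num : (0:ℝ) ≤ 2)]
    linarith
  · right
    rw [Metric.mem_closedBall, Real.dist_eq]
    set y' := y - Real.pi with hy'
    have hsin' : |Real.sin y'| = |Real.sin y| := by
      rw [hy', show y - Real.pi = -(Real.pi - y) by ring, Real.sin_neg,
        Real.sin_pi_sub, abs_neg]
    have hj := jordan (x := y') (by rw [abs_le]; constructor <;> [skip; skip] <;> simp [hy'] <;> linarith)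
    rw [hsin'] at hj
    have hsin : |Real.sin y| ≤ R'/2 := by linarith
    have : |y'| ≤ Real.pi/2 * (R'/2) := by
      have h2 : 2/Real.pi * |y'| ≤ R'/2 := le_trans hj hsin
      have h4 := mul_le_mul_of_nonneg_left h2 hπ.le
      have h5 : Real.pi * (2/Real.pi*|y'|) = 2*|y'| := by field_simp
      linarith
    have hty : θ - (φ + 2*Real.pi) = 2*y' := by rw [hy', hy]; ring
    rw [hty, abs_mul, _root_.abs_of_nonneg (by norm_num : (0:ℝ) ≤ 2)]
    linarith

lemma measurableSet_pDisc (α : ℂ) (η : ℝ) : MeasurableSet (pDisc α η) := by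
  have h : pDisc α η = unitDisc ∩
      ((fun z => ‖(α - z) / (1 - (starRingEnd ℂ) α * z)‖) ⁻¹' Set.Iio η) := by
    ext z; simp [pDisc, Set.mem_sep_iff]
  rw [h]
  apply (measurableSet_ball).inter
  apply Measurable.comp (continuous_norm.measurable) ?_ measurableSet_Iio
  exact ((measurable_const.sub measurable_id).div
    (measurable_const.sub (measurable_const.mul measurable_id)))

lemma nnpi : (NNReal.pi : ℝ≥0∞) = ENNReal.ofReal Real.pi := by
  rw [ENNReal.ofReal]
  congr 1
  ext
  simp [Real.coe_toNNReal _ Real.pi_pos.le]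

lemma mA_closedBall (α : ℂ) {ρ : ℝ} (hρ : 0 ≤ ρ) :
    mA (Metric.closedBall α ρ) = ENNReal.ofReal (ρ^2) := by
  rw [mA, Measure.smul_apply, Complex.volume_closedBall, smul_eq_mul, nnpi,
    ← ENNReal.ofReal_pow hρ]
  rw [mul_comm (ENNReal.ofReal (ρ^2)) _, ← mul_assoc,
    ENNReal.inv_mul_cancel (by simp [Real.pi_pos]) ENNReal.ofReal_ne_top, one_mul]

lemma const_collapse {K₂ K₁ K₄ d p q : ℝ} (hK₂ : 0 < K₂) (hK₁ : 0 < K₁) (hK₄ : 0 < K₄)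
    (hd : 0 < d) (hp : 0 < p) (hq : 0 < q) :
    (K₂ * d ^ (-(2+p/q))) ^ (1/p) * (K₁*d) ^ (1/q) * (K₄*d^2) ^ (1/p)
      = K₂^(1/p) * K₁^(1/q) * K₄^(1/p) := by
  have hp' : p ≠ 0 := hp.ne'
  have hq' : q ≠ 0 := hq.ne'
  rw [Real.mul_rpow hK₂.le (Real.rpow_nonneg hd.le _),
      Real.mul_rpow hK₁.le hd.le,
      Real.mul_rpow hK₄.le (sq_nonneg _),
      ← Real.rpow_natCast d 2,
      ← Real.rpow_mul hd.le, ← Real.rpow_mul hd.le]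
  rw [show (K₂ ^ (1/p) * d ^ (-(2+p/q)*(1/p))) * (K₁ ^ (1/q) * d ^ (1/q))
        * (K₄ ^ (1/p) * d ^ (((2:ℕ):ℝ)*(1/p)))
      = (K₂^(1/p) * K₁^(1/q) * K₄^(1/p))
        * (d ^ (-(2+p/q)*(1/p)) * d ^ (1/q) * d ^ (((2:ℕ):ℝ)*(1/p))) from by ring]
  rw [← Real.rpow_add hd, ← Real.rpow_add hd]
  rw [show -(2+p/q)*(1/p) + 1/q + ((2:ℕ):ℝ)*(1/p) = 0 from by push_cast; field_simp; ring]
  rw [Real.rpow_zero, mul_one]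


/-- for the test functions `f_α`,
`‖f_α χ_{G ∩ Δ(α,η)}‖_{T_p^q} ≤ C (m(G ∩ Δ(α,η))/m(Δ(α,η)))^{1/p}` with `C` independent
of `α` and of the measurable set `G ⊆ 𝔻`. -/

theorem test_function_restricted_estimate (p q : ℝ) (hp : 1 ≤ p) (hq : 1 ≤ q)
    (lam γ : ℝ) (hlam : max 1 (p / q) < lam) (hγ : (lam + 2) / p < γ)
    (η : ℝ) (hη : η ∈ Set.Ioo (0:ℝ) 1) :
    ∃ C > (0:ℝ), ∀ G : Set ℂ, MeasurableSet G → G ⊆ unitDisc → ∀ α ∈ unitDisc,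
      tentNorm p q (Set.indicator (G ∩ pDisc α η) (testFun p q γ α)) ≤
        ENNReal.ofReal C * (mA (G ∩ pDisc α η) / mA (pDisc α η)) ^ ((1:ℝ) / p) := by
  have hp0 : (0:ℝ) < p := lt_of_lt_of_le one_pos hp
  have hq0 : (0:ℝ) < q := lt_of_lt_of_le one_pos hq
  obtain ⟨hη0, hη1⟩ := hη
  have hem : (0:ℝ) < 1 - η := by linarith
  have hπ := Real.pi_pos
  have hlam1 : (1:ℝ) < lam := lt_of_le_of_lt (le_max_left _ _) hlam
  have hlam2 : p/q < lam := lt_of_le_of_lt (le_max_right _ _) hlam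
  have hγp : lam + 2 < γ * p := (div_lt_iff₀ hp0).mp hγ
  have hγ0 : (0:ℝ) < γ := by nlinarith
  have hs : (0:ℝ) < γ - 1/p - 1/q := by
    have hq2 : p/q = p * (1/q) := by ring
    have h3 : 1 + p/q < γ * p := by linarith
    have h4 : (1 + p/q)/p < γ := (div_lt_iff₀ hp0).mpr (by linarith)
    have h5 : (1 + p/q)/p = 1/p + 1/q := by
      rw [div_eq_iff hp0.ne']
      field_simp
    linarith [h5 ▸ h4]
  have hcη0 : (0:ℝ) < (1 - η^2)/4 := by nlinarith
  have hK₂0 : (0:ℝ) < (2:ℝ)^((γ - 1/p - 1/q)*p) / ((1 - η^2)/4) :=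
    div_pos (Real.rpow_pos_of_pos two_pos _) hcη0
  have hK₁0 : (0:ℝ) < 24*Real.pi/(1-η) := div_pos (by positivity) hem
  have hK₄0 : (0:ℝ) < (2/(1-η))^2 := pow_pos (div_pos two_pos hem) 2
  refine ⟨((2:ℝ)^((γ - 1/p - 1/q)*p) / ((1 - η^2)/4))^(1/p) * (24*Real.pi/(1-η))^(1/q)
      * ((2/(1-η))^2)^(1/p),
    mul_pos (mul_pos (Real.rpow_pos_of_pos hK₂0 _) (Real.rpow_pos_of_pos hK₁0 _))
      (Real.rpow_pos_of_pos hK₄0 _), ?_⟩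
  intro G hG hGsub α hα
  have haU : ‖α‖ < 1 := by simpa [unitDisc, Complex.dist_eq] using hα
  have ha0 : (0:ℝ) ≤ ‖α‖ := norm_nonneg α
  have hd0 : (0:ℝ) < 1 - ‖α‖ := by linarith
  set E := G ∩ pDisc α η with hEdef
  have hEmeas : MeasurableSet E := hG.inter (measurableSet_pDisc α η)
  set M := ((2:ℝ)^((γ - 1/p - 1/q)*p) / ((1 - η^2)/4)) * (1 - ‖α‖) ^ (-(2+p/q))
    with hMdef
  have hM0 : (0:ℝ) < M := mul_pos hK₂0 (Real.rpow_pos_of_pos hd0 _)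
  -- pointwise bound
  have hpoint : ∀ z : ℂ,
      ENNReal.ofReal (‖Set.indicator E (testFun p q γ α) z‖ ^ p
          / (1 - ‖z‖))
        ≤ Set.indicator E (fun _ => ENNReal.ofReal M) z := by
    intro z
    by_cases hzE : z ∈ E
    · rw [Set.indicator_of_mem hzE, Set.indicator_of_mem hzE]
      apply ENNReal.ofReal_le_ofReal
      have hzP : z ∈ pDisc α η := hzE.2
      obtain ⟨b1, b2, b3, b4, b5⟩ := pdisc_bounds haU hη0 hη1 hzP
      have hA0 : (0:ℝ) < 1 - ‖α‖ ^ 2 := by nlinarith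
      have habs : ‖testFun p q γ α z‖
          = (1 - ‖α‖ ^ 2) ^ (γ - 1/p - 1/q)
            / ‖1 - (starRingEnd ℂ) α * z‖ ^ γ := by
        simp only [testFun]
        rw [norm_div, Complex.norm_real, Real.norm_eq_abs, Complex.norm_cpow_real,
          _root_.abs_of_nonneg (Real.rpow_nonneg hA0.le _)]
      have hAd : 1 - ‖α‖ ^ 2 ≤ 2*(1 - ‖α‖) := by nlinarith
      have hnum : ((1 - ‖α‖ ^ 2) ^ (γ - 1/p - 1/q)) ^ p
          ≤ (2:ℝ)^((γ - 1/p - 1/q)*p) * (1 - ‖α‖) ^ ((γ - 1/p - 1/q)*p) := by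
        rw [← Real.rpow_mul hA0.le, ← Real.mul_rpow (by norm_num) hd0.le]
        exact Real.rpow_le_rpow hA0.le hAd (mul_nonneg hs.le hp0.le)
      have hden : (1 - ‖α‖) ^ (γ*p)
          ≤ (‖1 - (starRingEnd ℂ) α * z‖ ^ γ) ^ p := by
        rw [← Real.rpow_mul (norm_nonneg _)]
        exact Real.rpow_le_rpow hd0.le b4 (mul_nonneg hγ0.le hp0.le)
      have hstep1 : ‖testFun p q γ α z‖ ^ p
          ≤ (2:ℝ)^((γ - 1/p - 1/q)*p) * (1 - ‖α‖) ^ ((γ - 1/p - 1/q)*p)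
            / (1 - ‖α‖) ^ (γ*p) := by
        rw [habs, Real.div_rpow (Real.rpow_nonneg hA0.le _)
          (Real.rpow_nonneg (norm_nonneg _) _)]
        exact div_le_div₀ (by positivity) hnum (Real.rpow_pos_of_pos hd0 _) hden
      have hstep2 : ‖testFun p q γ α z‖ ^ p / (1 - ‖z‖)
          ≤ ((2:ℝ)^((γ - 1/p - 1/q)*p) * (1 - ‖α‖) ^ ((γ - 1/p - 1/q)*p)
              / (1 - ‖α‖) ^ (γ*p)) / ((1 - η^2)/4 * (1 - ‖α‖)) := by
        apply div_le_div₀ (by positivity) hstep1 (mul_pos hcη0 hd0) b2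
      refine le_trans hstep2 (le_of_eq ?_)
      have hp' : p ≠ 0 := hp0.ne'
      have hq' : q ≠ 0 := hq0.ne'
      have e1 : (1 - ‖α‖) ^ ((γ - 1/p - 1/q)*p) / (1 - ‖α‖) ^ (γ*p)
          = (1 - ‖α‖) ^ (-(1+p/q)) := by
        rw [← Real.rpow_sub hd0]
        congr 1
        field_simp
        ring
      have e2 : (1 - ‖α‖) ^ (-(1+p/q)) / (1 - ‖α‖)
          = (1 - ‖α‖) ^ (-(2+p/q)) := by
        rw [show (-(2+p/q)) = (-(1+p/q)) - 1 by ring, Real.rpow_sub hd0, Real.rpow_one]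
      calc (2:ℝ)^((γ - 1/p - 1/q)*p) * (1 - ‖α‖) ^ ((γ - 1/p - 1/q)*p)
              / (1 - ‖α‖) ^ (γ*p) / ((1 - η^2)/4 * (1 - ‖α‖))
          = (2:ℝ)^((γ - 1/p - 1/q)*p) * ((1 - ‖α‖) ^ ((γ - 1/p - 1/q)*p)
              / (1 - ‖α‖) ^ (γ*p)) / ((1 - η^2)/4 * (1 - ‖α‖)) := by
            ring
        _ = (2:ℝ)^((γ - 1/p - 1/q)*p) * (1 - ‖α‖) ^ (-(1+p/q))
              / ((1 - η^2)/4 * (1 - ‖α‖)) := by rw [e1]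
        _ = ((2:ℝ)^((γ - 1/p - 1/q)*p) / ((1 - η^2)/4))
              * ((1 - ‖α‖) ^ (-(1+p/q)) / (1 - ‖α‖)) := by
            field_simp
        _ = M := by rw [e2, hMdef]
    · rw [Set.indicator_of_notMem hzE, Set.indicator_of_notMem hzE]
      simp [Real.zero_rpow hp0.ne']
  -- inner integral bound
  have hinner : ∀ ξ : ℂ,
      (∫⁻ z in coneRegion (1/2) ξ ∩ Set.univ,
        ENNReal.ofReal (‖Set.indicator E (testFun p q γ α) z‖ ^ p
          / (1 - ‖z‖)) ∂mA)
      ≤ ENNReal.ofReal M * mA (E ∩ (coneRegion (1/2) ξ ∩ Set.univ)) := by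
    intro ξ
    calc (∫⁻ z in coneRegion (1/2) ξ ∩ Set.univ,
          ENNReal.ofReal (‖Set.indicator E (testFun p q γ α) z‖ ^ p
            / (1 - ‖z‖)) ∂mA)
        ≤ ∫⁻ z in coneRegion (1/2) ξ ∩ Set.univ,
            Set.indicator E (fun _ => ENNReal.ofReal M) z ∂mA := lintegral_mono hpoint
      _ = ENNReal.ofReal M * mA (E ∩ (coneRegion (1/2) ξ ∩ Set.univ)) := by
          rw [lintegral_indicator hEmeas, setLIntegral_const, Measure.restrict_apply hEmeas]
  -- the exceptional set T
  set rT := Real.pi/2 * (12*(1 - ‖α‖)/(1-η)) with hrT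
  set T := Metric.closedBall (Complex.arg α) rT
      ∪ Metric.closedBall (Complex.arg α + 2*Real.pi) rT with hT
  have hTmeas : MeasurableSet T := measurableSet_closedBall.union measurableSet_closedBall
  have hrT0 : (0:ℝ) ≤ rT := by
    rw [hrT]
    exact mul_nonneg (by positivity) (div_nonneg (by linarith) (by linarith))
  have hTvol : volume T ≤ ENNReal.ofReal (24*Real.pi/(1-η) * (1 - ‖α‖)) := by
    calc volume T ≤ volume (Metric.closedBall (Complex.arg α) rT)
          + volume (Metric.closedBall (Complex.arg α + 2*Real.pi) rT) := measure_union_le _ _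
      _ = ENNReal.ofReal (2*rT) + ENNReal.ofReal (2*rT) := by
          rw [Real.volume_closedBall, Real.volume_closedBall]
      _ = ENNReal.ofReal (4*rT) := by
          rw [← ENNReal.ofReal_add (by linarith) (by linarith)]
          congr 1
          ring
      _ = ENNReal.ofReal (24*Real.pi/(1-η) * (1 - ‖α‖)) := by
          congr 1
          rw [hrT]
          field_simp
          ring
  -- cones away from T miss E
  have hvanish : ∀ θ : ℝ, θ ∈ Set.Ioo (0:ℝ) (2*Real.pi) → θ ∉ T →
      E ∩ (coneRegion (1/2) (Complex.exp (θ * Complex.I)) ∩ Set.univ) = ∅ := by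
    intro θ hθ hθT
    rw [Set.eq_empty_iff_forall_notMem]
    intro w hw
    apply hθT
    have hwP : w ∈ pDisc α η := hw.1.2
    have hwC : w ∈ coneRegion (1/2) (Complex.exp (θ * Complex.I)) := hw.2.1
    obtain ⟨c1, c2, c3, c4, c5⟩ := pdisc_bounds haU hη0 hη1 hwP
    have hcd := cone_dist (Complex.norm_exp_ofReal_mul_I θ) hwC
    have t1 : ‖Complex.exp (θ * Complex.I) - α‖
        ≤ 3*(1 - ‖w‖) + ‖α - w‖ := by
      have h6 := norm_sub_le_norm_sub_add_norm_sub (Complex.exp (θ * Complex.I)) w α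
      rw [norm_sub_rev (Complex.exp (θ * Complex.I)) w,
        norm_sub_rev w α] at h6
      linarith
    have t2 : (1-η) * ‖Complex.exp (θ * Complex.I) - α‖
        ≤ 11*(1 - ‖α‖) := by
      have h6 := mul_le_mul_of_nonneg_left t1 hem.le
      nlinarith [c1, c3, hη0, hd0]
    have hαe : ‖Complex.exp ((Complex.arg α : ℝ) * Complex.I) - α‖
        = 1 - ‖α‖ := by
      have h8 := Complex.norm_mul_exp_arg_mul_I α
      have h7 : Complex.exp ((Complex.arg α : ℝ) * Complex.I) - α
          = ((1 - ‖α‖ : ℝ) : ℂ) * Complex.exp ((Complex.arg α : ℝ) * Complex.I) := by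
        push_cast
        linear_combination h8
      rw [h7, norm_mul, Complex.norm_real, Real.norm_eq_abs, Complex.norm_exp_ofReal_mul_I, mul_one,
        _root_.abs_of_nonneg hd0.le]
    have t3 : (1-η) * ‖Complex.exp (θ * Complex.I)
          - Complex.exp ((Complex.arg α : ℝ) * Complex.I)‖
        ≤ 12*(1 - ‖α‖) := by
      have t4 := norm_sub_le_norm_sub_add_norm_sub (Complex.exp (θ * Complex.I)) α
        (Complex.exp ((Complex.arg α : ℝ) * Complex.I))
      rw [norm_sub_rev α (Complex.exp ((Complex.arg α : ℝ) * Complex.I)), hαe] at t4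
      nlinarith [t2, hem, hd0]
    have t5 : 2 * |Real.sin ((θ - Complex.arg α)/2)| ≤ 12*(1 - ‖α‖)/(1-η) := by
      rw [le_div_iff₀ hem, ← chord θ (Complex.arg α)]
      linarith
    have := arc_mem hθ (Complex.neg_pi_lt_arg α) (Complex.arg_le_pi α) t5
    rw [hT, hrT]
    exact this
  -- outer pointwise bound
  have hqp0 : (0:ℝ) ≤ q/p := le_of_lt (div_pos hq0 hp0)
  have h1q0 : (0:ℝ) ≤ 1/q := by positivity
  have h1p0 : (0:ℝ) ≤ 1/p := by positivity
  have houter : ∀ θ ∈ Set.Ioo (0:ℝ) (2*Real.pi),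
      (∫⁻ z in coneRegion (1/2) (Complex.exp (θ * Complex.I)) ∩ Set.univ,
        ENNReal.ofReal (‖Set.indicator E (testFun p q γ α) z‖ ^ p
          / (1 - ‖z‖)) ∂mA) ^ (q/p)
      ≤ Set.indicator T (fun _ => (ENNReal.ofReal M * mA E) ^ (q/p)) θ := by
    intro θ hθ
    by_cases hθT : θ ∈ T
    · rw [Set.indicator_of_mem hθT]
      apply ENNReal.rpow_le_rpow _ hqp0
      exact le_trans (hinner _) (mul_le_mul_right (measure_mono Set.inter_subset_left) _)
    · rw [Set.indicator_of_notMem hθT]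
      have h0 : (∫⁻ z in coneRegion (1/2) (Complex.exp (θ * Complex.I)) ∩ Set.univ,
          ENNReal.ofReal (‖Set.indicator E (testFun p q γ α) z‖ ^ p
            / (1 - ‖z‖)) ∂mA) = 0 := by
        apply le_antisymm _ zero_le
        calc (∫⁻ z in coneRegion (1/2) (Complex.exp (θ * Complex.I)) ∩ Set.univ,
              ENNReal.ofReal (‖Set.indicator E (testFun p q γ α) z‖ ^ p
                / (1 - ‖z‖)) ∂mA)
            ≤ ENNReal.ofReal M
              * mA (E ∩ (coneRegion (1/2) (Complex.exp (θ * Complex.I)) ∩ Set.univ)) :=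
              hinner _
          _ = 0 := by rw [hvanish θ hθ hθT]; simp
      rw [h0, ENNReal.zero_rpow_of_pos (div_pos hq0 hp0)]
  -- ratio denominator bound
  have hMAp : mA (pDisc α η)
      ≤ ENNReal.ofReal ((2/(1-η))^2 * (1 - ‖α‖)^2) := by
    have hsub : pDisc α η ⊆ Metric.closedBall α (2*(1 - ‖α‖)/(1-η)) := by
      intro z hz
      obtain ⟨b1, _, _, _, _⟩ := pdisc_bounds haU hη0 hη1 hz
      rw [Metric.mem_closedBall, Complex.dist_eq, norm_sub_rev z α]
      rw [le_div_iff₀ hem]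
      nlinarith [hη1, hd0.le]
    calc mA (pDisc α η) ≤ mA (Metric.closedBall α (2*(1 - ‖α‖)/(1-η))) :=
          measure_mono hsub
      _ = ENNReal.ofReal ((2*(1 - ‖α‖)/(1-η))^2) :=
          mA_closedBall α (div_nonneg (by linarith) hem.le)
      _ = ENNReal.ofReal ((2/(1-η))^2 * (1 - ‖α‖)^2) := by
          congr 1
          field_simp
  -- constant collapse
  have hK4d0 : (0:ℝ) < (2/(1-η))^2 * (1 - ‖α‖)^2 :=
    mul_pos hK₄0 (pow_pos hd0 2)
  have hzpos : (0:ℝ) < ((2/(1-η))^2 * (1 - ‖α‖)^2) ^ (1/p) :=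
    Real.rpow_pos_of_pos hK4d0 _
  have hK₁d0 : (0:ℝ) < 24*Real.pi/(1-η) * (1 - ‖α‖) := mul_pos hK₁0 hd0
  have hreal : M ^ (1/p) * (24*Real.pi/(1-η) * (1 - ‖α‖)) ^ (1/q)
      * ((2/(1-η))^2 * (1 - ‖α‖)^2) ^ (1/p)
      = ((2:ℝ)^((γ - 1/p - 1/q)*p) / ((1 - η^2)/4))^(1/p) * (24*Real.pi/(1-η))^(1/q)
        * ((2/(1-η))^2)^(1/p) := by
    rw [hMdef]
    exact const_collapse hK₂0 hK₁0 hK₄0 hd0 hp0 hq0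
  have hrealdiv : M ^ (1/p) * (24*Real.pi/(1-η) * (1 - ‖α‖)) ^ (1/q)
      = (((2:ℝ)^((γ - 1/p - 1/q)*p) / ((1 - η^2)/4))^(1/p) * (24*Real.pi/(1-η))^(1/q)
        * ((2/(1-η))^2)^(1/p)) / (((2/(1-η))^2 * (1 - ‖α‖)^2) ^ (1/p)) := by
    rw [eq_div_iff hzpos.ne']
    exact hreal
  have hexp : q/p*(1/q) = 1/p := by
    field_simp
  -- main chain
  calc tentNorm p q (Set.indicator E (testFun p q γ α))
      = (∫⁻ θ in Set.Ioo 0 (2*Real.pi),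
          (∫⁻ z in coneRegion (1/2) (Complex.exp (θ * Complex.I)) ∩ Set.univ,
            ENNReal.ofReal (‖Set.indicator E (testFun p q γ α) z‖ ^ p
              / (1 - ‖z‖)) ∂mA) ^ (q/p)) ^ (1/q) := rfl
    _ ≤ (∫⁻ θ in Set.Ioo (0:ℝ) (2*Real.pi),
          Set.indicator T (fun _ => (ENNReal.ofReal M * mA E) ^ (q/p)) θ) ^ (1/q) :=
        ENNReal.rpow_le_rpow (setLIntegral_mono' measurableSet_Ioo houter) h1q0
    _ = ((ENNReal.ofReal M * mA E) ^ (q/p) * volume (T ∩ Set.Ioo (0:ℝ) (2*Real.pi))) ^ (1/q) := by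
        rw [lintegral_indicator hTmeas, setLIntegral_const, Measure.restrict_apply hTmeas]
    _ ≤ ((ENNReal.ofReal M * mA E) ^ (q/p)
          * ENNReal.ofReal (24*Real.pi/(1-η) * (1 - ‖α‖))) ^ (1/q) := by
        apply ENNReal.rpow_le_rpow _ h1q0
        exact mul_le_mul_right (le_trans (measure_mono Set.inter_subset_left) hTvol) _
    _ = (ENNReal.ofReal M) ^ (1/p) * (mA E) ^ (1/p)
          * (ENNReal.ofReal (24*Real.pi/(1-η) * (1 - ‖α‖))) ^ (1/q) := by
        rw [ENNReal.mul_rpow_of_nonneg _ _ h1q0, ← ENNReal.rpow_mul, hexp,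
          ENNReal.mul_rpow_of_nonneg _ _ h1p0]
    _ = ENNReal.ofReal (M ^ (1/p))
          * ENNReal.ofReal ((24*Real.pi/(1-η) * (1 - ‖α‖)) ^ (1/q))
          * (mA E) ^ (1/p) := by
        rw [ENNReal.ofReal_rpow_of_pos hM0, ENNReal.ofReal_rpow_of_pos hK₁d0]
        ring
    _ = (ENNReal.ofReal (((2:ℝ)^((γ - 1/p - 1/q)*p) / ((1 - η^2)/4))^(1/p)
            * (24*Real.pi/(1-η))^(1/q) * ((2/(1-η))^2)^(1/p))
          / ENNReal.ofReal (((2/(1-η))^2 * (1 - ‖α‖)^2) ^ (1/p)))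
          * (mA E) ^ (1/p) := by
        rw [← ENNReal.ofReal_mul (Real.rpow_nonneg hM0.le _), hrealdiv,
          ENNReal.ofReal_div_of_pos hzpos]
    _ = ENNReal.ofReal (((2:ℝ)^((γ - 1/p - 1/q)*p) / ((1 - η^2)/4))^(1/p)
            * (24*Real.pi/(1-η))^(1/q) * ((2/(1-η))^2)^(1/p))
          * ((mA E) / ENNReal.ofReal ((2/(1-η))^2 * (1 - ‖α‖)^2)) ^ ((1:ℝ)/p) := by
        rw [ENNReal.div_rpow_of_nonneg _ _ h1p0, ENNReal.ofReal_rpow_of_pos hK4d0]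
        simp only [div_eq_mul_inv]
        ring
    _ ≤ ENNReal.ofReal (((2:ℝ)^((γ - 1/p - 1/q)*p) / ((1 - η^2)/4))^(1/p)
            * (24*Real.pi/(1-η))^(1/q) * ((2/(1-η))^2)^(1/p))
          * (mA E / mA (pDisc α η)) ^ ((1:ℝ)/p) := by
        apply mul_le_mul_right
        apply ENNReal.rpow_le_rpow _ h1p0
        exact ENNReal.div_le_div_left hMAp _
end
end
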